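/- arXiv:1606.09309 — 4 statements merged into one kernel-verified Lean document; each statement's English description precedes it below -/
import Mathlib

section
/- Let s, b ≥ 1 be fixed integers and let {a_n} be the (s,b)-Generacci sequence. Then for all n > (s+1)b + 1, the sequence satisfies the recurrence a_n = a_{n−b} + b·a_{n−(s+1)b}. -/
open scoped BigOperators

/-- Bin index (1-indexed) of position `ℓ` when bins have size `b`: `⌈ℓ/b⌉`. -/
def binIdx (b ℓ : ℕ) : ℕ := (ℓ + b - 1) / b

/-- A finite set of indices is `(s,b)`-legal if the bin indices of any two distinct
elements differ by more than `s`. -/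
def SBLegal (s b : ℕ) (L : Finset ℕ) : Prop :=
  ∀ i ∈ L, ∀ j ∈ L, i ≠ j →
    s < max (binIdx b i) (binIdx b j) - min (binIdx b i) (binIdx b j)

/-- `m` has an `(s,b)`-Generacci legal decomposition using only `a_1, …, a_{i-1}`. -/
def SBRepr (s b : ℕ) (a : ℕ → ℕ) (i m : ℕ) : Prop :=
  ∃ L : Finset ℕ, (∀ j ∈ L, 1 ≤ j ∧ j < i) ∧ SBLegal s b L ∧ (∑ j ∈ L, a j) = m

/-- `a` (1-indexed) is the `(s,b)`-Generacci sequence: an increasing sequence of positive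
integers in which each `a i` is the smallest positive integer having no `(s,b)`-Generacci
legal decomposition using elements of `{a_1, …, a_{i-1}}`. -/
def IsGeneracci (s b : ℕ) (a : ℕ → ℕ) : Prop :=
  (∀ i, 1 ≤ i → a i < a (i + 1)) ∧
  ∀ i, 1 ≤ i → IsLeast {m : ℕ | 0 < m ∧ ¬ SBRepr s b a i m} (a i)

lemma binIdx_le_iff {b : ℕ} (hb : 1 ≤ b) (ℓ t : ℕ) : binIdx b ℓ ≤ t ↔ ℓ ≤ t * b := by
  unfold binIdx
  rw [Nat.div_le_iff_le_mul_add_pred (by omega)]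
  have : b * t = t * b := by ring
  omega

lemma binIdx_mono {b : ℕ} {ℓ ℓ' : ℕ} (h : ℓ ≤ ℓ') : binIdx b ℓ ≤ binIdx b ℓ' :=
  Nat.div_le_div_right (by omega)

lemma binIdx_eq {b : ℕ} (hb : 1 ≤ b) (q r : ℕ) (h1 : 1 ≤ r) (h2 : r ≤ b) :
    binIdx b (q * b + r) = q + 1 := by
  have hle : binIdx b (q * b + r) ≤ q + 1 := by
    rw [binIdx_le_iff hb]
    have : (q+1)*b = q*b + b := by ring
    omega
  have hgt : ¬ binIdx b (q * b + r) ≤ q := by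
    rw [binIdx_le_iff hb]; omega
  omega

section seq
variable {s b : ℕ} {a : ℕ → ℕ}

lemma a_pos (ha : IsGeneracci s b a) {i : ℕ} (hi : 1 ≤ i) : 0 < a i := (ha.2 i hi).1.1

lemma not_repr (ha : IsGeneracci s b a) {i : ℕ} (hi : 1 ≤ i) : ¬ SBRepr s b a i (a i) :=
  (ha.2 i hi).1.2

lemma a_le_of_not_repr (ha : IsGeneracci s b a) {i m : ℕ} (hi : 1 ≤ i) (hm : 0 < m)
    (h : ¬ SBRepr s b a i m) : a i ≤ m := (ha.2 i hi).2 ⟨hm, h⟩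

lemma repr_of_lt (ha : IsGeneracci s b a) {i m : ℕ} (hi : 1 ≤ i) (hm : 0 < m)
    (h : m < a i) : SBRepr s b a i m := by
  by_contra hc
  exact absurd (a_le_of_not_repr ha hi hm hc) (by omega)

lemma a_mono (ha : IsGeneracci s b a) {i j : ℕ} (hi : 1 ≤ i) (hij : i ≤ j) : a i ≤ a j := by
  induction j, hij using Nat.le_induction with
  | base => exact le_refl _
  | succ j hj ih => exact le_trans ih (le_of_lt (ha.1 j (le_trans hi hj)))

lemma a_lt (ha : IsGeneracci s b a) {i j : ℕ} (hi : 1 ≤ i) (hij : i < j) : a i < a j :=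
  lt_of_lt_of_le (ha.1 i hi) (a_mono ha (by omega) hij)

lemma le_a_self (ha : IsGeneracci s b a) : ∀ i, 1 ≤ i → i ≤ a i := by
  intro i
  induction i with
  | zero => omega
  | succ n ih =>
    intro _
    rcases Nat.eq_zero_or_pos n with h | h
    · subst h; exact a_pos ha le_rfl
    · have := ha.1 n h; have := ih h; omega

lemma legal_pair {L : Finset ℕ} (hL : SBLegal s b L) {j ℓ : ℕ} (hj : j ∈ L) (hℓ : ℓ ∈ L)
    (hne : ℓ ≠ j) (hle : ℓ ≤ j) : binIdx b ℓ + s < binIdx b j := by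
  have h := hL ℓ hℓ j hj hne
  have hm : binIdx b ℓ ≤ binIdx b j := binIdx_mono hle
  rw [max_eq_right hm, min_eq_left hm] at h
  omega
end seq

section main
variable {s b : ℕ} {a : ℕ → ℕ}

lemma repr_add (hb : 1 ≤ b) (ha : IsGeneracci s b a) {j T r : ℕ} (hj : 1 ≤ j)
    (hbin : T + s + 1 ≤ binIdx b j) (hr : SBRepr s b a (T * b + 1) r) :
    SBRepr s b a (j + 1) (a j + r) := by
  obtain ⟨L, hLb, hleg, hsum⟩ := hr
  have hTb : ∀ ℓ ∈ L, ℓ ≤ T * b := fun ℓ hℓ => by have := hLb ℓ hℓ; omega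
  have hbinL : ∀ ℓ ∈ L, binIdx b ℓ ≤ T := fun ℓ hℓ =>
    (binIdx_le_iff hb ℓ T).2 (hTb ℓ hℓ)
  have hjgt : T * b < j := by
    by_contra h
    have := (binIdx_le_iff hb j T).2 (by omega)
    omega
  have hjL : j ∉ L := fun h => absurd (hTb j h) (by omega)
  refine ⟨insert j L, ?_, ?_, ?_⟩
  · intro ℓ hℓ
    rcases Finset.mem_insert.1 hℓ with h | h
    · omega
    · have := hLb ℓ h; omega
  · intro x hx y hy hxy
    rcases Finset.mem_insert.1 hx with hx' | hx' <;> rcases Finset.mem_insert.1 hy with hy' | hy'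
    · omega
    · subst hx'
      have h1 := hbinL y hy'
      have : binIdx b y ≤ binIdx b x := by omega
      rw [max_eq_left this, min_eq_right this]; omega
    · subst hy'
      have h1 := hbinL x hx'
      have : binIdx b x ≤ binIdx b y := by omega
      rw [max_eq_right this, min_eq_left this]; omega
    · exact hleg x hx' y hy' hxy
  · rw [Finset.sum_insert hjL, hsum]

lemma lower_step (hb : 1 ≤ b) (ha : IsGeneracci s b a) {j T : ℕ} (hj : 1 ≤ j)
    (hbin : binIdx b j = T + s + 1) : a j + a (T * b + 1) ≤ a (j + 1) := by
  by_contra h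
  push_neg at h
  have haj : a j < a (j + 1) := ha.1 j hj
  have hTpos : 0 < a (T * b + 1) := a_pos ha (by omega)
  set r := a (j + 1) - a j with hrdef
  have hr : SBRepr s b a (T * b + 1) r := repr_of_lt ha (by omega) (by omega) (by omega)
  have := repr_add hb ha hj (by omega) hr
  have heq : a j + r = a (j + 1) := by omega
  rw [heq] at this
  exact not_repr ha (by omega) this
end main

section upper
variable {s b : ℕ} {a : ℕ → ℕ}

lemma upper (hb : 1 ≤ b) (ha : IsGeneracci s b a) :
    ∀ i, 1 ≤ i → ∀ m, SBRepr s b a i m → m < a i := by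
  intro i
  induction i using Nat.strong_induction_on with
  | _ i IH =>
    intro hi m hm
    obtain ⟨L, hLb, hleg, hsum⟩ := hm
    rcases L.eq_empty_or_nonempty with hL | hL
    · subst hL
      simp only [Finset.sum_empty] at hsum
      have := a_pos ha hi
      omega
    · set j := L.max' hL with hjdef
      have hjL : j ∈ L := L.max'_mem hL
      have hjmax : ∀ ℓ ∈ L, ℓ ≤ j := fun ℓ hℓ => L.le_max' ℓ hℓ
      have hj1 : 1 ≤ j := (hLb j hjL).1
      have hji : j < i := (hLb j hjL).2
      have hsum' : a j + ∑ ℓ ∈ L.erase j, a ℓ = m := by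
        rw [Finset.add_sum_erase L a hjL]; exact hsum
      by_cases hbig : s + 2 ≤ binIdx b j
      · set T := binIdx b j - (s + 1) with hTdef
        have hbin : binIdx b j = T + s + 1 := by omega
        have hTb : ∀ ℓ ∈ L.erase j, ℓ ≤ T * b := by
          intro ℓ hℓ
          have hℓL := Finset.mem_of_mem_erase hℓ
          have hne := Finset.ne_of_mem_erase hℓ
          have := legal_pair hleg hjL hℓL hne (hjmax ℓ hℓL)
          exact (binIdx_le_iff hb ℓ T).1 (by omega)
        have hTj : T * b < j := by
          by_contra h
          have := (binIdx_le_iff hb j T).2 (by omega)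
          omega
        have hrepr : SBRepr s b a (T * b + 1) (∑ ℓ ∈ L.erase j, a ℓ) :=
          ⟨L.erase j, fun ℓ hℓ => ⟨(hLb ℓ (Finset.mem_of_mem_erase hℓ)).1, by
              have := hTb ℓ hℓ; omega⟩,
            fun x hx y hy hxy => hleg x (Finset.mem_of_mem_erase hx) y
              (Finset.mem_of_mem_erase hy) hxy, rfl⟩
        have hlt : ∑ ℓ ∈ L.erase j, a ℓ < a (T * b + 1) :=
          IH (T * b + 1) (by omega) (by omega) _ hrepr
        have hstep := lower_step hb ha hj1 hbin
        have : a (j + 1) ≤ a i := a_mono ha (by omega) (by omega)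
        omega
      · have hsingle : ∀ ℓ ∈ L, ℓ = j := by
          intro ℓ hℓ
          by_contra hne
          have h1 := legal_pair hleg hjL hℓ hne (hjmax ℓ hℓ)
          have h2 : ¬ binIdx b ℓ ≤ 0 := fun h =>
            absurd ((binIdx_le_iff hb ℓ 0).1 h) (by have := (hLb ℓ hℓ).1; omega)
          omega
        have hLeq : L = {j} := by
          apply Finset.eq_singleton_iff_unique_mem.2 ⟨hjL, hsingle⟩
        rw [hLeq, Finset.sum_singleton] at hsum
        have : a j < a i := a_lt ha hj1 hji
        omega
end upper

section eqstep
variable {s b : ℕ} {a : ℕ → ℕ}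

lemma eq_step (hb : 1 ≤ b) (ha : IsGeneracci s b a) {j T : ℕ} (hj : 1 ≤ j)
    (hbin : binIdx b j = T + s + 1) : a (j + 1) = a j + a (T * b + 1) := by
  have hge := lower_step hb ha hj hbin
  have hTpos : 0 < a (T * b + 1) := a_pos ha (by omega)
  have hjpos : 0 < a j := a_pos ha hj
  have hle : a (j + 1) ≤ a j + a (T * b + 1) := by
    apply a_le_of_not_repr ha (by omega) (by omega)
    rintro ⟨L, hLb, hleg, hsum⟩
    by_cases hjL : j ∈ L
    · have hjmax : ∀ ℓ ∈ L, ℓ ≤ j := fun ℓ hℓ => by have := hLb ℓ hℓ; omega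
      have hTb : ∀ ℓ ∈ L.erase j, ℓ ≤ T * b := by
        intro ℓ hℓ
        have hℓL := Finset.mem_of_mem_erase hℓ
        have hne := Finset.ne_of_mem_erase hℓ
        have := legal_pair hleg hjL hℓL hne (hjmax ℓ hℓL)
        exact (binIdx_le_iff hb ℓ T).1 (by omega)
      have hsum' : a j + ∑ ℓ ∈ L.erase j, a ℓ = a j + a (T * b + 1) := by
        rw [Finset.add_sum_erase L a hjL]; exact hsum
      have hrepr : SBRepr s b a (T * b + 1) (a (T * b + 1)) :=
        ⟨L.erase j, fun ℓ hℓ => ⟨(hLb ℓ (Finset.mem_of_mem_erase hℓ)).1, by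
            have := hTb ℓ hℓ; omega⟩,
          fun x hx y hy hxy => hleg x (Finset.mem_of_mem_erase hx) y
            (Finset.mem_of_mem_erase hy) hxy, by omega⟩
      exact not_repr ha (by omega) hrepr
    · have hrepr : SBRepr s b a j (a j + a (T * b + 1)) :=
        ⟨L, fun ℓ hℓ => ⟨(hLb ℓ hℓ).1, by
            have h1 := (hLb ℓ hℓ).2
            have : ℓ ≠ j := fun h => hjL (h ▸ hℓ)
            omega⟩, hleg, hsum⟩
      have := upper hb ha j hj _ hrepr
      omega
  omega

lemma a_eq_self (hb : 1 ≤ b) (ha : IsGeneracci s b a) :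
    ∀ i, 1 ≤ i → i ≤ (s + 1) * b + 1 → a i = i := by
  intro i
  induction i using Nat.strong_induction_on with
  | _ i IH =>
    intro hi hibnd
    have h1 : i ≤ a i := le_a_self ha i hi
    have h2 : a i ≤ i := by
      apply a_le_of_not_repr ha hi (by omega)
      rintro ⟨L, hLb, hleg, hsum⟩
      rcases L.eq_empty_or_nonempty with hL | hL
      · subst hL; simp at hsum; omega
      · set j := L.max' hL with hjdef
        have hjL : j ∈ L := L.max'_mem hL
        have hjmax : ∀ ℓ ∈ L, ℓ ≤ j := fun ℓ hℓ => L.le_max' ℓ hℓ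
        have hj1 : 1 ≤ j := (hLb j hjL).1
        have hji : j < i := (hLb j hjL).2
        have hjsmall : binIdx b j ≤ s + 1 := by
          rw [binIdx_le_iff hb]
          omega
        have hsingle : ∀ ℓ ∈ L, ℓ = j := by
          intro ℓ hℓ
          by_contra hne
          have h1 := legal_pair hleg hjL hℓ hne (hjmax ℓ hℓ)
          have h2 : ¬ binIdx b ℓ ≤ 0 := fun h =>
            absurd ((binIdx_le_iff hb ℓ 0).1 h) (by have := (hLb ℓ hℓ).1; omega)
          omega
        have hLeq : L = {j} := Finset.eq_singleton_iff_unique_mem.2 ⟨hjL, hsingle⟩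
        rw [hLeq, Finset.sum_singleton] at hsum
        rw [IH j hji hj1 (by omega)] at hsum
        omega
    omega
end eqstep

section lemD
variable {s b : ℕ} {a : ℕ → ℕ}

lemma lemD (hb : 1 ≤ b) (hs : 1 ≤ s) (ha : IsGeneracci s b a) (t : ℕ) :
    ∀ r, r ≤ b → a ((s + 1 + t) * b + r + 1)
      = a ((s + 1 + t) * b + 1) + r * a ((t + 1) * b + 1) := by
  intro r
  induction r with
  | zero => intro _; simp
  | succ r ih =>
    intro hr
    have hbin : binIdx b ((s + 1 + t) * b + (r + 1)) = (t + 1) + s + 1 := by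
      rw [binIdx_eq hb _ _ (by omega) hr]
      omega
    have hstep := eq_step hb ha (j := (s + 1 + t) * b + (r + 1)) (T := t + 1)
      (by omega) hbin
    have hidx : (s + 1 + t) * b + (r + 1) + 1 = (s + 1 + t) * b + (r + 1) + 1 := rfl
    have hih := ih (by omega)
    have e1 : (s + 1 + t) * b + (r + 1) = (s + 1 + t) * b + r + 1 := by omega
    rw [e1] at hstep
    rw [show (s + 1 + t) * b + (r + 1) + 1 = (s + 1 + t) * b + r + 1 + 1 from by omega,
      hstep, hih]
    ring
end lemD

section final
variable {s b : ℕ} {a : ℕ → ℕ}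

lemma key (hb : 1 ≤ b) (hs : 1 ≤ s) (ha : IsGeneracci s b a) (t r : ℕ)
    (h1 : 1 ≤ r) (h2 : r ≤ b) :
    a ((s + 1 + t) * b + r + 1) = a ((s + t) * b + r + 1) + b * a (t * b + r + 1) := by
  rcases Nat.lt_or_ge t 1 with ht | ht
  · -- t = 0
    have ht0 : t = 0 := by omega
    subst ht0
    have d1 := lemD hb hs ha 0 r h2
    rw [show (s + 1 + 0) * b = (s + 1) * b from by ring] at d1 ⊢
    rw [show (0 + 1) * b + 1 = b + 1 from by ring] at d1
    have hsb : (s + 1) * b = s * b + b := by ring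
    have v1 : a ((s + 1) * b + 1) = (s + 1) * b + 1 := a_eq_self hb ha _ (by omega) (by omega)
    have v2 : a (b + 1) = b + 1 := a_eq_self hb ha _ (by omega) (by omega)
    have v3 : a (s * b + r + 1) = s * b + r + 1 := a_eq_self hb ha _ (by omega) (by omega)
    have v4 : a (r + 1) = r + 1 := a_eq_self hb ha _ (by omega) (by omega)
    rw [show (s + 0) * b + r + 1 = s * b + r + 1 from by ring,
      show 0 * b + r + 1 = r + 1 from by ring, d1, v1, v2, v3, v4]
    ring
  · obtain ⟨u, hu⟩ : ∃ u, t = u + 1 := ⟨t - 1, by omega⟩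
    rcases Nat.lt_or_ge t (s + 1) with hts | hts
    · -- 1 ≤ t ≤ s
      have d1 := lemD hb hs ha t r h2
      have d2 := lemD hb hs ha u r h2
      have dE := lemD hb hs ha u b (le_refl b)
      rw [show (s + 1 + u) * b + b + 1 = (s + 1 + t) * b + 1 from by rw [hu]; ring] at dE
      rw [show (s + 1 + u) * b = (s + t) * b from by rw [hu]; ring] at d2 dE
      rw [show (u + 1) * b + 1 = t * b + 1 from by rw [hu]] at d2 dE
      have hmul1 : (t + 1) * b ≤ (s + 1) * b := Nat.mul_le_mul_right b (by omega)
      have hmul2 : t * b ≤ s * b := Nat.mul_le_mul_right b (by omega)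
      have hsb : (s + 1) * b = s * b + b := by ring
      have v1 : a ((t + 1) * b + 1) = (t + 1) * b + 1 :=
        a_eq_self hb ha _ (by omega) (by omega)
      have v2 : a (t * b + 1) = t * b + 1 := a_eq_self hb ha _ (by omega) (by omega)
      have v3 : a (t * b + r + 1) = t * b + r + 1 := a_eq_self hb ha _ (by omega) (by omega)
      rw [d1, dE, d2, v1, v2, v3]
      ring
    · -- t ≥ s + 1
      obtain ⟨w, hw⟩ : ∃ w, t = s + 1 + w := ⟨t - s - 1, by omega⟩
      have d1 := lemD hb hs ha t r h2
      have d2 := lemD hb hs ha (s + w) r h2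
      have dE2 := lemD hb hs ha (s + w) b (le_refl b)
      have d3 := lemD hb hs ha w r h2
      have dEw := lemD hb hs ha w b (le_refl b)
      rw [show (s + 1 + (s + w)) * b = (s + t) * b from by rw [hw]; ring] at d2 dE2
      rw [show (s + w + 1) * b + 1 = t * b + 1 from by rw [hw]; ring] at d2 dE2
      rw [show (s + t) * b + b + 1 = (s + 1 + t) * b + 1 from by ring] at dE2
      rw [show (s + 1 + w) * b = t * b from by rw [hw]] at d3 dEw
      rw [show t * b + b + 1 = (t + 1) * b + 1 from by ring] at dEw
      rw [d1, dE2, dEw, d2, d3]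
      ring
end final

theorem stmt_0 (s b : ℕ) (hs : 1 ≤ s) (hb : 1 ≤ b) (a : ℕ → ℕ)
    (ha : IsGeneracci s b a) :
    ∀ n : ℕ, (s + 1) * b + 1 < n → a n = a (n - b) + b * a (n - (s + 1) * b) := by
  intro n hn
  set M := n - ((s + 1) * b + 1) with hM
  have hM1 : 1 ≤ M := by omega
  obtain ⟨t, r, hr1, hr2, hMeq⟩ : ∃ t r, 1 ≤ r ∧ r ≤ b ∧ M = b * t + r := by
    refine ⟨(M - 1) / b, M - b * ((M - 1) / b), ?_, ?_, ?_⟩ <;>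
    · have hdm := Nat.div_add_mod (M - 1) b
      have hmod : (M - 1) % b < b := Nat.mod_lt _ (by omega)
      omega
  have hA : (s + 1 + t) * b = (s + 1) * b + b * t := by ring
  have hB : (s + 1 + t) * b = (s + t) * b + b := by ring
  have hC : b * t = t * b := by ring
  have e1 : n = (s + 1 + t) * b + r + 1 := by omega
  have e2 : n - b = (s + t) * b + r + 1 := by omega
  have e3 : n - (s + 1) * b = t * b + r + 1 := by omega
  rw [e2, e3, e1]
  exact key hb hs ha t r hr1 hr2
end

section
/- Let {q_n} be the Fibonacci Quilt sequence. For all n ≥ 6, q_{n+1} = q_n + q_{n−4}. -/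
open scoped BigOperators

/-- A finite set of indices is FQ-legal: distinct indices never differ by 1, 3 or 4,
and the set does not contain both 1 and 3. -/
def FQLegal (L : Finset ℕ) : Prop :=
  (∀ i ∈ L, ∀ j ∈ L, i ≠ j →
    max i j - min i j ≠ 1 ∧ max i j - min i j ≠ 3 ∧ max i j - min i j ≠ 4) ∧
  ¬ (1 ∈ L ∧ 3 ∈ L)

/-- `m` has an FQ-legal decomposition using only `q_1, …, q_{i-1}`. -/
def FQRepr (q : ℕ → ℕ) (i m : ℕ) : Prop :=
  ∃ L : Finset ℕ, (∀ j ∈ L, 1 ≤ j ∧ j < i) ∧ FQLegal L ∧ (∑ j ∈ L, q j) = m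

/-- `q` (1-indexed) is the Fibonacci Quilt sequence: `q 1 = 1` and for `i ≥ 2`,
`q i` is the smallest positive integer having no FQ-legal decomposition using
`{q_1, …, q_{i-1}}`. -/
def IsFQSeq (q : ℕ → ℕ) : Prop :=
  q 1 = 1 ∧ ∀ i, 2 ≤ i → IsLeast {m : ℕ | 0 < m ∧ ¬ FQRepr q i m} (q i)

/-! ### Auxiliary material -/

instance : DecidablePred FQLegal := fun L => by unfold FQLegal; infer_instance

/-- explicit first values of the FQ sequence -/
def qv : ℕ → ℕ
| 1 => 1 | 2 => 2 | 3 => 3 | 4 => 4 | 5 => 5 | 6 => 7 | 7 => 9 | 8 => 12 | 9 => 16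
| 10 => 21 | _ => 0

lemma legal_subset {L L' : Finset ℕ} (h : L' ⊆ L) (hL : FQLegal L) : FQLegal L' :=
  ⟨fun i hi j hj hij => hL.1 i (h hi) j (h hj) hij, fun hc => hL.2 ⟨h hc.1, h hc.2⟩⟩

lemma legal_gap {L : Finset ℕ} (h : FQLegal L) {a b : ℕ} (ha : a ∈ L) (hb : b ∈ L)
    (hab : b < a) : a - b ≠ 1 ∧ a - b ≠ 3 ∧ a - b ≠ 4 := by
  have := h.1 a ha b hb (by omega)
  rwa [max_eq_left hab.le, min_eq_right hab.le] at this

lemma legal_singleton (a : ℕ) : FQLegal {a} := by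
  constructor
  · intro i hi j hj hij
    simp only [Finset.mem_singleton] at hi hj
    omega
  · simp only [Finset.mem_singleton]
    omega

section FQ

variable {q : ℕ → ℕ} (hq : IsFQSeq q)

include hq
set_option linter.unusedSectionVars false

lemma fqPos : ∀ i, 1 ≤ i → 0 < q i := by
  intro i hi
  rcases eq_or_lt_of_le hi with h | h
  · rw [← h, hq.1]; norm_num
  · exact ((hq.2 i h).1).1

lemma fqNR : ∀ k, 2 ≤ k → ¬ FQRepr q k (q k) := fun k hk => ((hq.2 k hk).1).2

lemma fqReprLt : ∀ k, 2 ≤ k → ∀ m, 0 < m → m < q k → FQRepr q k m := by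
  intro k hk m hm hmq
  by_contra h
  have := (hq.2 k hk).2 ⟨hm, h⟩
  omega

omit hq in
lemma fqReprMono {i i' m : ℕ} (h : i ≤ i') (hr : FQRepr q i m) : FQRepr q i' m := by
  obtain ⟨L, hL, hleg, hsum⟩ := hr
  exact ⟨L, fun j hj => ⟨(hL j hj).1, lt_of_lt_of_le (hL j hj).2 h⟩, hleg, hsum⟩

lemma fqLt : ∀ i, 1 ≤ i → q i < q (i + 1) := by
  intro i hi
  have hrepr : FQRepr q (i + 1) (q i) := by
    refine ⟨{i}, ?_, legal_singleton i, by simp⟩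
    intro j hj
    simp only [Finset.mem_singleton] at hj
    omega
  have hNR := fqNR hq (i + 1) (by omega)
  by_contra h
  push_neg at h
  rcases eq_or_lt_of_le h with hEq | hlt
  · exact hNR (hEq ▸ hrepr)
  · rcases eq_or_lt_of_le hi with h1 | h2
    · -- i = 1 : q (i+1) < q 1 = 1 contradicts positivity
      have hp := fqPos hq (i + 1) (by omega)
      rw [← h1] at hlt hp
      rw [hq.1] at hlt
      omega
    · have hpos := fqPos hq (i + 1) (by omega)
      exact hNR (fqReprMono (by omega) (fqReprLt hq i h2 (q (i + 1)) hpos hlt))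

lemma fqMono : ∀ i j, 1 ≤ i → i ≤ j → q i ≤ q j := by
  intro i j hi hij
  induction j with
  | zero => omega
  | succ k IH =>
    rcases Nat.lt_or_ge i (k + 1) with h | h
    · have h1 := IH (by omega)
      have h2 := fqLt hq k (by omega)
      omega
    · have : i = k + 1 := by omega
      rw [this]

omit hq in
/-- transfer a representation into decidable (explicit-value) form -/
lemma repr_to_dec {B t : ℕ} (hv : ∀ j, 1 ≤ j → j ≤ B → q j = qv j)
    (h : FQRepr q (B + 1) t) :
    ∃ L ∈ (Finset.Icc 1 B).powerset, FQLegal L ∧ ∑ j ∈ L, qv j = t := by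
  obtain ⟨L, hL, hleg, hsum⟩ := h
  refine ⟨L, Finset.mem_powerset.2 fun j hj => Finset.mem_Icc.2
    ⟨(hL j hj).1, by have := (hL j hj).2; omega⟩, hleg, ?_⟩
  rw [← hsum]
  exact Finset.sum_congr rfl fun j hj =>
    (hv j (hL j hj).1 (by have := (hL j hj).2; omega)).symm

omit hq in
lemma dec_to_repr {B t : ℕ} (hv : ∀ j, 1 ≤ j → j ≤ B → q j = qv j)
    (h : ∃ L ∈ (Finset.Icc 1 B).powerset, FQLegal L ∧ ∑ j ∈ L, qv j = t) :
    FQRepr q (B + 1) t := by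
  obtain ⟨L, hP, hleg, hsum⟩ := h
  have hsub := Finset.mem_powerset.1 hP
  refine ⟨L, fun j hj => ?_, hleg, ?_⟩
  · have := Finset.mem_Icc.1 (hsub hj)
    omega
  · rw [← hsum]
    refine Finset.sum_congr rfl fun j hj => ?_
    have := Finset.mem_Icc.1 (hsub hj)
    exact hv j this.1 this.2

/-- establish a value of the sequence by deciding representability -/
lemma fq_val {i v : ℕ} (hi : 2 ≤ i) (hv0 : 0 < v)
    (hv : ∀ j, 1 ≤ j → j ≤ i - 1 → q j = qv j)
    (h1 : ∀ L ∈ (Finset.Icc 1 (i - 1)).powerset, ¬ (FQLegal L ∧ ∑ j ∈ L, qv j = v))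
    (h2 : ∀ m, m < v → 0 < m →
      ∃ L ∈ (Finset.Icc 1 (i - 1)).powerset, FQLegal L ∧ ∑ j ∈ L, qv j = m) :
    q i = v := by
  have hiB : i - 1 + 1 = i := by omega
  refine (hq.2 i hi).unique ⟨⟨hv0, ?_⟩, ?_⟩
  · intro hr
    rw [← hiB] at hr
    obtain ⟨L, hP, hleg, hsum⟩ := repr_to_dec hv hr
    exact h1 L hP ⟨hleg, hsum⟩
  · rintro m ⟨hm, hnr⟩
    by_contra hlt
    push_neg at hlt
    exact hnr (hiB ▸ dec_to_repr hv (h2 m hlt hm))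

/-- Part (a): everything below `q n + q (n-4)` is representable at stage `n+1`. -/
lemma partA {n : ℕ} (hn : 6 ≤ n) :
    ∀ m, 0 < m → m < q n + q (n - 4) → FQRepr q (n + 1) m := by
  intro m hm hmlt
  rcases lt_trichotomy m (q n) with h | h | h
  · exact fqReprMono (by omega) (fqReprLt hq n (by omega) m hm h)
  · refine ⟨{n}, ?_, legal_singleton n, by simpa using h.symm⟩
    intro j hj
    simp only [Finset.mem_singleton] at hj
    omega
  · have hr : FQRepr q (n - 4) (m - q n) :=
      fqReprLt hq (n - 4) (by omega) _ (by omega) (by omega)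
    obtain ⟨L, hL, hleg, hsum⟩ := hr
    have hbnd : ∀ j ∈ L, 1 ≤ j ∧ j ≤ n - 5 := by
      intro j hj
      have := hL j hj
      omega
    have hnL : n ∉ L := fun hmem => by have := (hbnd n hmem).2; omega
    refine ⟨insert n L, ?_, ⟨?_, ?_⟩, ?_⟩
    · intro j hj
      rcases Finset.mem_insert.1 hj with rfl | hj
      · omega
      · have := hbnd j hj; omega
    · intro a ha b hb hab
      rcases Finset.mem_insert.1 ha with rfl | ha' <;>
        rcases Finset.mem_insert.1 hb with rfl | hb'
      · omega
      · have hb2 := hbnd b hb'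
        rw [max_eq_left (by omega), min_eq_right (by omega)]
        omega
      · have ha2 := hbnd a ha'
        rw [max_eq_right (by omega), min_eq_left (by omega)]
        omega
      · exact hleg.1 a ha' b hb' hab
    · rintro ⟨h1, h3⟩
      rcases Finset.mem_insert.1 h1 with h1' | h1'
      · omega
      · rcases Finset.mem_insert.1 h3 with h3' | h3'
        · omega
        · exact hleg.2 ⟨h1', h3'⟩
    · rw [Finset.sum_insert hnL, hsum]
      omega

/-- combine (a) with a non-representability proof -/
lemma keyStep {n : ℕ} (hn : 6 ≤ n) (hb : ¬ FQRepr q (n + 1) (q n + q (n - 4))) :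
    q (n + 1) = q n + q (n - 4) := by
  refine (hq.2 (n + 1) (by omega)).unique ⟨⟨?_, hb⟩, ?_⟩
  · have := fqPos hq n (by omega)
    omega
  · rintro m ⟨hm, hnr⟩
    by_contra hlt
    push_neg at hlt
    exact hnr (partA hq hn m hm hlt)

end FQ

set_option maxRecDepth 400000 in
theorem stmt_2 (q : ℕ → ℕ) (hq : IsFQSeq q) :
    ∀ n : ℕ, 6 ≤ n → q (n + 1) = q n + q (n - 4) := by
  have v1 : q 1 = 1 := hq.1
  have hv1 : ∀ j, 1 ≤ j → j ≤ 1 → q j = qv j := by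
    intro j hj1 hj2
    have hj : j = 1 := by omega
    rw [hj, v1]; rfl
  have v2 : q 2 = 2 := fq_val hq (i := 2) (v := 2) (by norm_num) (by norm_num) hv1
    (by decide) (by decide)
  have hv2 : ∀ j, 1 ≤ j → j ≤ 2 → q j = qv j := by
    intro j hj1 hj2
    interval_cases j
    · rw [v1]; rfl
    · rw [v2]; rfl
  have v3 : q 3 = 3 := fq_val hq (i := 3) (v := 3) (by norm_num) (by norm_num) hv2
    (by decide) (by decide)
  have hv3 : ∀ j, 1 ≤ j → j ≤ 3 → q j = qv j := by
    intro j hj1 hj2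
    interval_cases j
    · rw [v1]; rfl
    · rw [v2]; rfl
    · rw [v3]; rfl
  have v4 : q 4 = 4 := fq_val hq (i := 4) (v := 4) (by norm_num) (by norm_num) hv3
    (by decide) (by decide)
  have hv4 : ∀ j, 1 ≤ j → j ≤ 4 → q j = qv j := by
    intro j hj1 hj2
    interval_cases j
    · rw [v1]; rfl
    · rw [v2]; rfl
    · rw [v3]; rfl
    · rw [v4]; rfl
  have v5 : q 5 = 5 := fq_val hq (i := 5) (v := 5) (by norm_num) (by norm_num) hv4
    (by decide) (by decide)
  have hv5 : ∀ j, 1 ≤ j → j ≤ 5 → q j = qv j := by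
    intro j hj1 hj2
    interval_cases j
    · rw [v1]; rfl
    · rw [v2]; rfl
    · rw [v3]; rfl
    · rw [v4]; rfl
    · rw [v5]; rfl
  have v6 : q 6 = 7 := fq_val hq (i := 6) (v := 7) (by norm_num) (by norm_num) hv5
    (by decide) (by decide)
  have hv6 : ∀ j, 1 ≤ j → j ≤ 6 → q j = qv j := by
    intro j hj1 hj2
    interval_cases j
    · rw [v1]; rfl
    · rw [v2]; rfl
    · rw [v3]; rfl
    · rw [v4]; rfl
    · rw [v5]; rfl
    · rw [v6]; rfl
  have v7 : q 7 = 9 := by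
    have hdec : ∀ L ∈ (Finset.Icc 1 6).powerset, ¬ (FQLegal L ∧ ∑ j ∈ L, qv j = 9) := by
      decide
    have h9 : ¬ FQRepr q 7 9 := by
      intro hr
      obtain ⟨L, hP, hleg, hsum⟩ := repr_to_dec (B := 6) hv6 hr
      exact hdec L hP ⟨hleg, hsum⟩
    have e : q 6 + q (6 - 4) = 9 := by
      have e2 : (6 : ℕ) - 4 = 2 := by norm_num
      rw [e2, v6, v2]
    have hb : ¬ FQRepr q (6 + 1) (q 6 + q (6 - 4)) := by rw [e]; exact h9
    have hk := keyStep hq (n := 6) (by norm_num) hb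
    rw [e] at hk
    exact hk
  have hv7 : ∀ j, 1 ≤ j → j ≤ 7 → q j = qv j := by
    intro j hj1 hj2
    interval_cases j
    · rw [v1]; rfl
    · rw [v2]; rfl
    · rw [v3]; rfl
    · rw [v4]; rfl
    · rw [v5]; rfl
    · rw [v6]; rfl
    · rw [v7]; rfl
  have v8 : q 8 = 12 := by
    have hdec : ∀ L ∈ (Finset.Icc 1 7).powerset, ¬ (FQLegal L ∧ ∑ j ∈ L, qv j = 12) := by
      decide
    have h12 : ¬ FQRepr q 8 12 := by
      intro hr
      obtain ⟨L, hP, hleg, hsum⟩ := repr_to_dec (B := 7) hv7 hr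
      exact hdec L hP ⟨hleg, hsum⟩
    have e : q 7 + q (7 - 4) = 12 := by
      have e2 : (7 : ℕ) - 4 = 3 := by norm_num
      rw [e2, v7, v3]
    have hb : ¬ FQRepr q (7 + 1) (q 7 + q (7 - 4)) := by rw [e]; exact h12
    have hk := keyStep hq (n := 7) (by norm_num) hb
    rw [e] at hk
    exact hk
  have hv8 : ∀ j, 1 ≤ j → j ≤ 8 → q j = qv j := by
    intro j hj1 hj2
    interval_cases j
    · rw [v1]; rfl
    · rw [v2]; rfl
    · rw [v3]; rfl
    · rw [v4]; rfl
    · rw [v5]; rfl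
    · rw [v6]; rfl
    · rw [v7]; rfl
    · rw [v8]; rfl
  have v9 : q 9 = 16 := by
    have hdec : ∀ L ∈ (Finset.Icc 1 8).powerset, ¬ (FQLegal L ∧ ∑ j ∈ L, qv j = 16) := by
      decide
    have h16 : ¬ FQRepr q 9 16 := by
      intro hr
      obtain ⟨L, hP, hleg, hsum⟩ := repr_to_dec (B := 8) hv8 hr
      exact hdec L hP ⟨hleg, hsum⟩
    have e : q 8 + q (8 - 4) = 16 := by
      have e2 : (8 : ℕ) - 4 = 4 := by norm_num
      rw [e2, v8, v4]
    have hb : ¬ FQRepr q (8 + 1) (q 8 + q (8 - 4)) := by rw [e]; exact h16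
    have hk := keyStep hq (n := 8) (by norm_num) hb
    rw [e] at hk
    exact hk
  have hv9 : ∀ j, 1 ≤ j → j ≤ 9 → q j = qv j := by
    intro j hj1 hj2
    interval_cases j
    · rw [v1]; rfl
    · rw [v2]; rfl
    · rw [v3]; rfl
    · rw [v4]; rfl
    · rw [v5]; rfl
    · rw [v6]; rfl
    · rw [v7]; rfl
    · rw [v8]; rfl
    · rw [v9]; rfl
  have v10 : q 10 = 21 := by
    have hdec : ∀ L ∈ (Finset.Icc 1 9).powerset, ¬ (FQLegal L ∧ ∑ j ∈ L, qv j = 21) := by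
      decide
    have h21 : ¬ FQRepr q 10 21 := by
      intro hr
      obtain ⟨L, hP, hleg, hsum⟩ := repr_to_dec (B := 9) hv9 hr
      exact hdec L hP ⟨hleg, hsum⟩
    have e : q 9 + q (9 - 4) = 21 := by
      have e2 : (9 : ℕ) - 4 = 5 := by norm_num
      rw [e2, v9, v5]
    have hb : ¬ FQRepr q (9 + 1) (q 9 + q (9 - 4)) := by rw [e]; exact h21
    have hk := keyStep hq (n := 9) (by norm_num) hb
    rw [e] at hk
    exact hk
  have hv10 : ∀ j, 1 ≤ j → j ≤ 10 → q j = qv j := by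
    intro j hj1 hj2
    interval_cases j
    · rw [v1]; rfl
    · rw [v2]; rfl
    · rw [v3]; rfl
    · rw [v4]; rfl
    · rw [v5]; rfl
    · rw [v6]; rfl
    · rw [v7]; rfl
    · rw [v8]; rfl
    · rw [v9]; rfl
    · rw [v10]; rfl
  have smallB : ∀ m ∈ Finset.range 8, ∀ L ∈ (Finset.Icc 1 m).powerset,
      FQLegal L → ∑ j ∈ L, qv j < qv (m + 2) + qv (m + 1) := by decide
  intro n
  induction n using Nat.strong_induction_on with
  | _ n IH =>
    intro hn
    by_cases hsmalln : n ≤ 9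
    · interval_cases n
      · show q 7 = q 6 + q 2
        rw [v7, v6, v2]
      · show q 8 = q 7 + q 3
        rw [v8, v7, v3]
      · show q 9 = q 8 + q 4
        rw [v9, v8, v4]
      · show q 10 = q 9 + q 5
        rw [v10, v9, v5]
    · obtain ⟨k, rfl⟩ : ∃ k, n = k + 10 := ⟨n - 10, by omega⟩
      -- the auxiliary recurrence q j = q (j-2) + q (j-3)
      have hrec2 : ∀ i, i + 5 ≤ k + 10 → q (i + 5) = q (i + 3) + q (i + 2) := by
        intro i
        induction i using Nat.strong_induction_on with
        | _ i IH2 =>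
          intro hi
          by_cases h5 : i ≤ 5
          · interval_cases i
            · show q 5 = q 3 + q 2
              rw [v5, v3, v2]
            · show q 6 = q 4 + q 3
              rw [v6, v4, v3]
            · show q 7 = q 5 + q 4
              rw [v7, v5, v4]
            · show q 8 = q 6 + q 5
              rw [v8, v6, v5]
            · show q 9 = q 7 + q 6
              rw [v9, v7, v6]
            · show q 10 = q 8 + q 7
              rw [v10, v8, v7]
          · by_cases h6 : i = 6
            · subst h6
              have h11 := IH 10 (by omega) (by omega)
              have h11' : q 11 = q 10 + q 6 := by
                have e : (10 : ℕ) - 4 = 6 := by norm_num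
                rw [e] at h11
                exact h11
              show q 11 = q 9 + q 8
              rw [h11', v10, v6, v9, v8]
            · obtain ⟨j, rfl⟩ : ∃ j, i = j + 7 := ⟨i - 7, by omega⟩
              have e1 := IH (j + 11) (by omega) (by omega)
              have e1' : q (j + 12) = q (j + 11) + q (j + 7) := by
                have e : j + 11 - 4 = j + 7 := by omega
                rw [e] at e1
                exact e1
              have e2 : q (j + 11) = q (j + 9) + q (j + 8) := IH2 (j + 6) (by omega) (by omega)
              have e3 : q (j + 10) = q (j + 8) + q (j + 7) := IH2 (j + 5) (by omega) (by omega)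
              show q (j + 12) = q (j + 10) + q (j + 9)
              omega
      -- the bound on legal sums
      have hBnd : ∀ m, m + 3 ≤ k + 10 → ∀ L : Finset ℕ,
          (∀ j ∈ L, 1 ≤ j ∧ j ≤ m) → FQLegal L →
          ∑ j ∈ L, q j < q (m + 2) + q (m + 1) := by
        intro m
        induction m using Nat.strong_induction_on with
        | _ m IHB =>
          intro hm L hLb hleg
          by_cases hm7 : m ≤ 7
          · have hsum : ∑ j ∈ L, q j = ∑ j ∈ L, qv j :=
              Finset.sum_congr rfl fun j hj =>
                hv10 j (hLb j hj).1 (by have := (hLb j hj).2; omega)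
            have hP : L ∈ (Finset.Icc 1 m).powerset :=
              Finset.mem_powerset.2 fun j hj => Finset.mem_Icc.2 ⟨(hLb j hj).1, (hLb j hj).2⟩
            have hd := smallB m (Finset.mem_range.2 (by omega)) L hP hleg
            rw [← hsum, ← hv10 (m + 1) (by omega) (by omega),
              ← hv10 (m + 2) (by omega) (by omega)] at hd
            exact hd
          · obtain ⟨t, rfl⟩ : ∃ t, m = t + 8 := ⟨m - 8, by omega⟩
            rcases L.eq_empty_or_nonempty with rfl | hne
            · have hp := fqPos hq (t + 9) (by omega)
              show ∑ j ∈ (∅ : Finset ℕ), q j < q (t + 10) + q (t + 9)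
              simp only [Finset.sum_empty]
              omega
            · have hmax := L.max'_mem hne
              set a := L.max' hne with haDef
              have hax : ∀ l ∈ L, l ≤ a := fun l hl => L.le_max' l hl
              by_cases ham : a = t + 8
              · have hmL : t + 8 ∈ L := ham ▸ hmax
                have hchar : ∀ l ∈ L, l ≠ t + 8 → l = t + 6 ∨ l ≤ t + 3 := by
                  intro l hl hne'
                  have hlt : l < t + 8 := by have := hax l hl; omega
                  have hg := legal_gap hleg hmL hl hlt
                  omega
                by_cases hm2 : t + 6 ∈ L
                · set L2 := (L.erase (t + 8)).erase (t + 6) with hL2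
                  have hchar2 : ∀ l ∈ L2, 1 ≤ l ∧ l ≤ t + 1 := by
                    intro l hl
                    have hl6 : l ≠ t + 6 := (Finset.mem_erase.1 hl).1
                    have hl' := (Finset.mem_erase.1 hl).2
                    have hl8 : l ≠ t + 8 := (Finset.mem_erase.1 hl').1
                    have hlL : l ∈ L := (Finset.mem_erase.1 hl').2
                    have h1 := hchar l hlL hl8
                    have hlt : l < t + 6 := by omega
                    have hg := legal_gap hleg hm2 hlL hlt
                    exact ⟨(hLb l hlL).1, by omega⟩
                  have hs1 : q (t + 8) + ∑ x ∈ L.erase (t + 8), q x = ∑ x ∈ L, q x :=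
                    Finset.add_sum_erase L q hmL
                  have hm2' : t + 6 ∈ L.erase (t + 8) := Finset.mem_erase.2 ⟨by omega, hm2⟩
                  have hs2 : q (t + 6) + ∑ x ∈ L2, q x = ∑ x ∈ L.erase (t + 8), q x :=
                    Finset.add_sum_erase _ q hm2'
                  have hB2 : ∑ x ∈ L2, q x < q (t + 3) + q (t + 2) :=
                    IHB (t + 1) (by omega) (by omega) L2 hchar2
                      (legal_subset
                        (fun x hx => (Finset.mem_erase.1 (Finset.mem_erase.1 hx).2).2) hleg)
                  have r1 : q (t + 5) = q (t + 3) + q (t + 2) := hrec2 t (by omega)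
                  have r2 : q (t + 8) = q (t + 6) + q (t + 5) := hrec2 (t + 3) (by omega)
                  have mo1 : q (t + 8) < q (t + 9) := fqLt hq (t + 8) (by omega)
                  have mo2 : q (t + 9) < q (t + 10) := fqLt hq (t + 9) (by omega)
                  show ∑ j ∈ L, q j < q (t + 10) + q (t + 9)
                  omega
                · have hchar1 : ∀ l ∈ L.erase (t + 8), 1 ≤ l ∧ l ≤ t + 3 := by
                    intro l hl
                    have hl8 : l ≠ t + 8 := (Finset.mem_erase.1 hl).1
                    have hlL : l ∈ L := (Finset.mem_erase.1 hl).2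
                    have h1 := hchar l hlL hl8
                    have hl6 : l ≠ t + 6 := fun he => hm2 (he ▸ hlL)
                    exact ⟨(hLb l hlL).1, by omega⟩
                  have hs1 : q (t + 8) + ∑ x ∈ L.erase (t + 8), q x = ∑ x ∈ L, q x :=
                    Finset.add_sum_erase L q hmL
                  have hB1 : ∑ x ∈ L.erase (t + 8), q x < q (t + 5) + q (t + 4) :=
                    IHB (t + 3) (by omega) (by omega) _ hchar1
                      (legal_subset (Finset.erase_subset _ _) hleg)
                  have r1 : q (t + 7) = q (t + 5) + q (t + 4) := hrec2 (t + 2) (by omega)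
                  have mo1 : q (t + 7) < q (t + 8) := fqLt hq (t + 7) (by omega)
                  have mo2 : q (t + 8) < q (t + 9) := fqLt hq (t + 8) (by omega)
                  have mo3 : q (t + 9) < q (t + 10) := fqLt hq (t + 9) (by omega)
                  show ∑ j ∈ L, q j < q (t + 10) + q (t + 9)
                  omega
              · have ham' : a < t + 8 := by
                  have := hLb a hmax
                  omega
                have hlb' : ∀ j ∈ L, 1 ≤ j ∧ j ≤ t + 7 := fun j hj =>
                  ⟨(hLb j hj).1, by have := hax j hj; omega⟩
                have hIB : ∑ j ∈ L, q j < q (t + 9) + q (t + 8) :=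
                  IHB (t + 7) (by omega) (by omega) L hlb' hleg
                have mo1 : q (t + 9) < q (t + 10) := fqLt hq (t + 9) (by omega)
                have mo2 : q (t + 8) < q (t + 9) := fqLt hq (t + 8) (by omega)
                show ∑ j ∈ L, q j < q (t + 10) + q (t + 9)
                omega
      -- non-representability of q (k+10) + q (k+6)
      have hb : ¬ FQRepr q (k + 10 + 1) (q (k + 10) + q (k + 10 - 4)) := by
        have e4 : k + 10 - 4 = k + 6 := by omega
        rw [e4]
        rintro ⟨L, hLb', hleg, hsum⟩
        have hLb : ∀ j ∈ L, 1 ≤ j ∧ j ≤ k + 10 := fun j hj =>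
          ⟨(hLb' j hj).1, by have := (hLb' j hj).2; omega⟩
        have r1 : q (k + 10) = q (k + 8) + q (k + 7) := hrec2 (k + 5) (by omega)
        have r2 : q (k + 9) = q (k + 7) + q (k + 6) := hrec2 (k + 4) (by omega)
        have r3 : q (k + 8) = q (k + 6) + q (k + 5) := hrec2 (k + 3) (by omega)
        have r4 : q (k + 8) = q (k + 7) + q (k + 3) := by
          have h := IH (k + 7) (by omega) (by omega)
          have e : k + 7 - 4 = k + 3 := by omega
          rw [e] at h
          exact h
        by_cases hA : k + 10 ∈ L
        · by_cases hA1 : k + 8 ∈ L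
          · have hsub : ({k + 10, k + 8} : Finset ℕ) ⊆ L := by
              intro x hx
              rcases Finset.mem_insert.1 hx with rfl | hx
              · exact hA
              · rw [Finset.mem_singleton.1 hx]; exact hA1
            have hle := Finset.sum_le_sum_of_subset (f := q) hsub
            rw [Finset.sum_pair (by omega : (k + 10 : ℕ) ≠ k + 8)] at hle
            have mo : q (k + 6) < q (k + 7) := fqLt hq (k + 6) (by omega)
            have mo2 : q (k + 7) < q (k + 8) := fqLt hq (k + 7) (by omega)
            omega
          · have hs1 : q (k + 10) + ∑ x ∈ L.erase (k + 10), q x = ∑ x ∈ L, q x :=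
              Finset.add_sum_erase L q hA
            have hchar : ∀ l ∈ L.erase (k + 10), 1 ≤ l ∧ l < k + 6 := by
              intro l hl
              obtain ⟨hl10, hlL⟩ := Finset.mem_erase.1 hl
              have hlt : l < k + 10 := by have := (hLb l hlL).2; omega
              have hg := legal_gap hleg hA hlL hlt
              have hl8 : l ≠ k + 8 := fun he => hA1 (he ▸ hlL)
              exact ⟨(hLb l hlL).1, by omega⟩
            exact fqNR hq (k + 6) (by omega)
              ⟨L.erase (k + 10), hchar, legal_subset (Finset.erase_subset _ _) hleg, by omega⟩
        · by_cases hB : k + 9 ∈ L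
          · have hs1 : q (k + 9) + ∑ x ∈ L.erase (k + 9), q x = ∑ x ∈ L, q x :=
              Finset.add_sum_erase L q hB
            have hchar : ∀ l ∈ L.erase (k + 9), 1 ≤ l ∧ (l = k + 7 ∨ l ≤ k + 4) := by
              intro l hl
              obtain ⟨hl9, hlL⟩ := Finset.mem_erase.1 hl
              have hl10 : l ≠ k + 10 := fun he => hA (he ▸ hlL)
              have hlt : l < k + 9 := by have := (hLb l hlL).2; omega
              have hg := legal_gap hleg hB hlL hlt
              have h1 := (hLb l hlL).1
              omega
            by_cases hB1 : k + 7 ∈ L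
            · have hB1' : k + 7 ∈ L.erase (k + 9) := Finset.mem_erase.2 ⟨by omega, hB1⟩
              have hs2 : q (k + 7) + ∑ x ∈ (L.erase (k + 9)).erase (k + 7), q x
                  = ∑ x ∈ L.erase (k + 9), q x := Finset.add_sum_erase _ q hB1'
              have hchar2 : ∀ l ∈ (L.erase (k + 9)).erase (k + 7), 1 ≤ l ∧ l < k + 3 := by
                intro l hl
                obtain ⟨hl7, hl'⟩ := Finset.mem_erase.1 hl
                have hlL : l ∈ L := (Finset.mem_erase.1 hl').2
                have hc := hchar l hl'
                have hlt : l < k + 7 := by omega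
                have hg := legal_gap hleg hB1 hlL hlt
                omega
              exact fqNR hq (k + 3) (by omega)
                ⟨(L.erase (k + 9)).erase (k + 7), hchar2,
                  legal_subset
                    (fun x hx => (Finset.mem_erase.1 (Finset.mem_erase.1 hx).2).2) hleg,
                  by omega⟩
            · have hchar' : ∀ l ∈ L.erase (k + 9), 1 ≤ l ∧ l < k + 8 := by
                intro l hl
                have hc := hchar l hl
                have hl7 : l ≠ k + 7 := fun he => hB1 (he ▸ (Finset.mem_erase.1 hl).2)
                omega
              exact fqNR hq (k + 8) (by omega)
                ⟨L.erase (k + 9), hchar', legal_subset (Finset.erase_subset _ _) hleg,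
                  by omega⟩
          · by_cases hC : k + 8 ∈ L
            · have hs1 : q (k + 8) + ∑ x ∈ L.erase (k + 8), q x = ∑ x ∈ L, q x :=
                Finset.add_sum_erase L q hC
              have hchar : ∀ l ∈ L.erase (k + 8), 1 ≤ l ∧ (l = k + 6 ∨ l ≤ k + 3) := by
                intro l hl
                obtain ⟨hl8, hlL⟩ := Finset.mem_erase.1 hl
                have hl10 : l ≠ k + 10 := fun he => hA (he ▸ hlL)
                have hl9 : l ≠ k + 9 := fun he => hB (he ▸ hlL)
                have hlt : l < k + 8 := by have := (hLb l hlL).2; omega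
                have hg := legal_gap hleg hC hlL hlt
                have h1 := (hLb l hlL).1
                omega
              by_cases hC1 : k + 6 ∈ L
              · have hC1' : k + 6 ∈ L.erase (k + 8) := Finset.mem_erase.2 ⟨by omega, hC1⟩
                have hs2 : q (k + 6) + ∑ x ∈ (L.erase (k + 8)).erase (k + 6), q x
                    = ∑ x ∈ L.erase (k + 8), q x := Finset.add_sum_erase _ q hC1'
                have hchar2 : ∀ l ∈ (L.erase (k + 8)).erase (k + 6), 1 ≤ l ∧ l < k + 2 := by
                  intro l hl
                  obtain ⟨hl6, hl'⟩ := Finset.mem_erase.1 hl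
                  have hlL : l ∈ L := (Finset.mem_erase.1 hl').2
                  have hc := hchar l hl'
                  have hlt : l < k + 6 := by omega
                  have hg := legal_gap hleg hC1 hlL hlt
                  omega
                exact fqNR hq (k + 7) (by omega)
                  ⟨(L.erase (k + 8)).erase (k + 6), (fun l hl => ⟨(hchar2 l hl).1, by
                      have := (hchar2 l hl).2; omega⟩),
                    legal_subset
                      (fun x hx => (Finset.mem_erase.1 (Finset.mem_erase.1 hx).2).2) hleg,
                    by omega⟩
              · have hchar' : ∀ l ∈ L.erase (k + 8), 1 ≤ l ∧ l < k + 9 := by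
                  intro l hl
                  have hc := hchar l hl
                  have hl6 : l ≠ k + 6 := fun he => hC1 (he ▸ (Finset.mem_erase.1 hl).2)
                  omega
                exact fqNR hq (k + 9) (by omega)
                  ⟨L.erase (k + 8), hchar', legal_subset (Finset.erase_subset _ _) hleg,
                    by omega⟩
            · have hall : ∀ j ∈ L, 1 ≤ j ∧ j ≤ k + 7 := by
                intro j hj
                have h1 := hLb j hj
                have h2 : j ≠ k + 10 := fun he => hA (he ▸ hj)
                have h3 : j ≠ k + 9 := fun he => hB (he ▸ hj)
                have h4 : j ≠ k + 8 := fun he => hC (he ▸ hj)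
                omega
              have hB7 : ∑ j ∈ L, q j < q (k + 9) + q (k + 8) :=
                hBnd (k + 7) (by omega) L hall hleg
              omega
      exact keyStep hq (n := k + 10) (by omega) hb
end

section
/- Let {q_n} be the Fibonacci Quilt sequence. For all n ≥ 5, q_{n+1} = q_{n−1} + q_{n−2}. -/
open scoped BigOperators

def Q : ℕ → ℕ
  | 0 => 0
  | 1 => 1
  | 2 => 2
  | 3 => 3
  | 4 => 4
  | 5 => 5
  | n+6 => Q (n+4) + Q (n+3)

lemma Q_rec (n : ℕ) : Q (n+6) = Q (n+4) + Q (n+3) := by simp [Q]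

lemma Q_lt_succ : ∀ n, Q n < Q (n+1) := by
  intro n
  induction n using Nat.strong_induction_on with
  | _ n ih =>
    match n with
    | 0 => decide
    | 1 => decide
    | 2 => decide
    | 3 => decide
    | 4 => decide
    | 5 => decide
    | (m+6) =>
      have h1 : Q (m+3) < Q (m+4) := ih (m+3) (by omega)
      have h2 : Q (m+4) < Q (m+5) := ih (m+4) (by omega)
      have e1 : Q (m+7) = Q (m+5) + Q (m+4) := Q_rec (m+1)
      have e2 : Q (m+6) = Q (m+4) + Q (m+3) := Q_rec m
      show Q (m+6) < Q (m+7)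
      omega

lemma Q_mono : StrictMono Q := strictMono_nat_of_lt_succ Q_lt_succ

lemma Q_pos {n : ℕ} (h : 1 ≤ n) : 0 < Q n := Q_mono (show 0 < n from h)

lemma Q_diff : ∀ t, Q (t+7) = Q (t+6) + Q (t+2) := by
  intro t
  match t with
  | 0 => decide
  | (s+1) =>
    have e1 : Q (s+8) = Q (s+6) + Q (s+5) := Q_rec (s+2)
    have e2 : Q (s+7) = Q (s+5) + Q (s+4) := Q_rec (s+1)
    have e3 : Q (s+6) = Q (s+4) + Q (s+3) := Q_rec s
    show Q (s+8) = Q (s+7) + Q (s+3)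
    omega

lemma FQLegal_subset {L L' : Finset ℕ} (h : FQLegal L) (hs : L' ⊆ L) : FQLegal L' :=
  ⟨fun i hi j hj hij => h.1 i (hs hi) j (hs hj) hij,
   fun hc => h.2 ⟨hs hc.1, hs hc.2⟩⟩

lemma FQLegal_singleton (k : ℕ) : FQLegal {k} := by
  constructor
  · intro i hi j hj hij
    simp only [Finset.mem_singleton] at hi hj
    omega
  · simp only [Finset.mem_singleton]
    omega

lemma FQLegal_insert {L : Finset ℕ} {k : ℕ} (h : FQLegal L) (hk : 6 ≤ k)
    (hfar : ∀ j ∈ L, j + 5 ≤ k) : FQLegal (insert k L) := by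
  constructor
  · intro i hi j hj hij
    rcases Finset.mem_insert.mp hi with hik | hi'
    · rcases Finset.mem_insert.mp hj with hjk | hj'
      · omega
      · have := hfar j hj'; omega
    · rcases Finset.mem_insert.mp hj with hjk | hj'
      · have := hfar i hi'; omega
      · exact h.1 i hi' j hj' hij
  · rintro ⟨h1, h3⟩
    rcases Finset.mem_insert.mp h1 with e1 | h1 <;>
      rcases Finset.mem_insert.mp h3 with e3 | h3
    · omega
    · omega
    · omega
    · exact h.2 ⟨h1, h3⟩

/-- Every positive integer has a legal representation with all parts at most `m`. -/
lemma rep : ∀ m, 0 < m →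
    ∃ L : Finset ℕ, FQLegal L ∧ (∀ j ∈ L, 1 ≤ j ∧ Q j ≤ m) ∧ ∑ j ∈ L, Q j = m := by
  intro m
  induction m using Nat.strong_induction_on with
  | _ m ih =>
    intro hm
    have hex : ∃ k, 1 ≤ k ∧ Q k ≤ m ∧ m < Q (k+1) := by
      have h1F : 1 ∈ (Finset.range (m+1)).filter (fun j => Q j ≤ m) := by
        simp only [Finset.mem_filter, Finset.mem_range]
        refine ⟨by omega, ?_⟩
        show Q 1 ≤ m
        simp [Q]; omega
      have hne : ((Finset.range (m+1)).filter (fun j => Q j ≤ m)).Nonempty := ⟨1, h1F⟩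
      refine ⟨((Finset.range (m+1)).filter (fun j => Q j ≤ m)).max' hne, ?_, ?_, ?_⟩
      · exact Finset.le_max' _ 1 h1F
      · exact (Finset.mem_filter.mp (Finset.max'_mem _ hne)).2
      · set k := ((Finset.range (m+1)).filter (fun j => Q j ≤ m)).max' hne with hkdef
        by_contra h
        push_neg at h
        have hmem : k + 1 ∈ (Finset.range (m+1)).filter (fun j => Q j ≤ m) := by
          simp only [Finset.mem_filter, Finset.mem_range]
          have : (k+1 : ℕ) ≤ Q (k+1) := Q_mono.le_apply
          exact ⟨by omega, h⟩
        have := Finset.le_max' _ (k+1) hmem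
        omega
    obtain ⟨k, hk1, hQk, hlt⟩ := hex
    by_cases hk6 : k ≤ 5
    · have hm7 : m < 7 := by
        have h6 : Q (k+1) ≤ Q 6 := Q_mono.monotone (by omega)
        have : Q 6 = 7 := rfl
        omega
      clear hlt hQk hk1 hk6
      interval_cases m
      · exact ⟨{1}, by decide, by decide, by decide⟩
      · exact ⟨{2}, by decide, by decide, by decide⟩
      · exact ⟨{3}, by decide, by decide, by decide⟩
      · exact ⟨{4}, by decide, by decide, by decide⟩
      · exact ⟨{5}, by decide, by decide, by decide⟩
      · exact ⟨{4, 2}, by decide, by decide, by decide⟩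
    · push_neg at hk6
      obtain ⟨t, rfl⟩ : ∃ t, k = t + 6 := ⟨k - 6, by omega⟩
      by_cases hr : m = Q (t+6)
      · refine ⟨{t+6}, FQLegal_singleton _, ?_, ?_⟩
        · intro j hj
          simp only [Finset.mem_singleton] at hj
          subst hj
          exact ⟨by omega, hQk⟩
        · simp [hr]
      · have hrlt : m - Q (t+6) < m := by
          have := Q_pos (show 1 ≤ t+6 by omega)
          omega
        have hrpos : 0 < m - Q (t+6) := by omega
        obtain ⟨L', hleg', hprop', hsum'⟩ := ih _ hrlt hrpos
        have hd : Q (t+7) = Q (t+6) + Q (t+2) := Q_diff t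
        have hlt' : m < Q (t+7) := hlt
        have hrQ : m - Q (t+6) < Q (t+2) := by omega
        have hsmall : ∀ j ∈ L', j + 5 ≤ t + 6 := by
          intro j hj
          have hQj := (hprop' j hj).2
          have hQj2 : Q j < Q (t+2) := by omega
          have := Q_mono.lt_iff_lt.mp hQj2
          omega
        have hkL : t + 6 ∉ L' := by
          intro h
          have := hsmall _ h
          omega
        refine ⟨insert (t+6) L', FQLegal_insert hleg' (by omega) hsmall, ?_, ?_⟩
        · intro j hj
          rcases Finset.mem_insert.mp hj with rfl | hj
          · exact ⟨by omega, hQk⟩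
          · exact ⟨(hprop' j hj).1, le_trans (hprop' j hj).2 (by omega)⟩
        · rw [Finset.sum_insert hkL, hsum']
          omega

set_option maxRecDepth 10000 in
/-- Bound on legal sums with indices at most `k`. -/
lemma sum_bound : ∀ k, ∀ L : Finset ℕ, FQLegal L → (∀ j ∈ L, 1 ≤ j ∧ j ≤ k) →
    ∑ j ∈ L, Q j < Q (k+3) := by
  intro k
  induction k using Nat.strong_induction_on with
  | _ k ih =>
    intro L hleg hbd
    by_cases hk : k ≤ 8
    · have base : ∀ n ∈ Finset.range 9, ∀ L ∈ (Finset.Icc 1 n).powerset,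
          FQLegal L → (∑ j ∈ L, Q j) < Q (n+3) := by decide
      refine base k (by simp; omega) L ?_ hleg
      rw [Finset.mem_powerset]
      intro j hj
      rw [Finset.mem_Icc]
      exact ⟨(hbd j hj).1, (hbd j hj).2⟩
    · push_neg at hk
      obtain ⟨t, rfl⟩ : ∃ t, k = t + 9 := ⟨k - 9, by omega⟩
      show ∑ j ∈ L, Q j < Q (t+12)
      rcases Finset.eq_empty_or_nonempty L with rfl | hLne
      · simpa using Q_pos (show 1 ≤ t + 12 by omega)
      · have hML := L.max'_mem hLne
        set M := L.max' hLne with hMdef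
        have hMk : M ≤ t + 9 := (hbd M hML).2
        by_cases hMtop : M = t + 9
        · rw [hMtop] at hML
          have hkey : ∀ j ∈ L.erase (t+9), j = t + 7 ∨ j ≤ t + 4 := by
            intro j hj
            have hjL := Finset.mem_of_mem_erase hj
            have hjne := Finset.ne_of_mem_erase hj
            have hjle : j ≤ t + 9 := by
              have := Finset.le_max' L j hjL
              omega
            have hp := hleg.1 j hjL (t+9) hML hjne
            omega
          have hsumL : Q (t+9) + ∑ j ∈ L.erase (t+9), Q j = ∑ j ∈ L, Q j :=
            Finset.add_sum_erase L Q hML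
          by_cases h7 : t + 7 ∈ L.erase (t+9)
          · have hkey2 : ∀ j ∈ (L.erase (t+9)).erase (t+7), j ≤ t + 2 := by
              intro j hj
              have hj1 := Finset.mem_of_mem_erase hj
              have hjne := Finset.ne_of_mem_erase hj
              have hj4 : j = t + 7 ∨ j ≤ t + 4 := hkey j hj1
              have hjL := Finset.mem_of_mem_erase hj1
              have h7L := Finset.mem_of_mem_erase h7
              have hp := hleg.1 j hjL (t+7) h7L hjne
              omega
            have hsumL2 : Q (t+7) + ∑ j ∈ (L.erase (t+9)).erase (t+7), Q j
                = ∑ j ∈ L.erase (t+9), Q j :=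
              Finset.add_sum_erase _ Q h7
            have ihs : ∑ j ∈ (L.erase (t+9)).erase (t+7), Q j < Q (t+5) :=
              ih (t+2) (by omega) ((L.erase (t+9)).erase (t+7))
                (FQLegal_subset hleg (fun x hx =>
                  Finset.mem_of_mem_erase (Finset.mem_of_mem_erase hx)))
                (fun j hj => ⟨(hbd j (Finset.mem_of_mem_erase (Finset.mem_of_mem_erase hj))).1,
                  hkey2 j hj⟩)
            have e1 : Q (t+12) = Q (t+10) + Q (t+9) := Q_rec (t+6)
            have e2 : Q (t+10) = Q (t+8) + Q (t+7) := Q_rec (t+4)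
            have m1 : Q (t+5) ≤ Q (t+8) := Q_mono.monotone (by omega)
            omega
          · have hkey2 : ∀ j ∈ L.erase (t+9), j ≤ t + 4 := by
              intro j hj
              rcases hkey j hj with rfl | h
              · exact absurd hj h7
              · exact h
            have ihs : ∑ j ∈ L.erase (t+9), Q j < Q (t+7) :=
              ih (t+4) (by omega) (L.erase (t+9))
                (FQLegal_subset hleg (Finset.erase_subset _ _))
                (fun j hj => ⟨(hbd j (Finset.mem_of_mem_erase hj)).1, hkey2 j hj⟩)
            have e1 : Q (t+12) = Q (t+10) + Q (t+9) := Q_rec (t+6)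
            have e2 : Q (t+10) = Q (t+8) + Q (t+7) := Q_rec (t+4)
            have m1 : Q (t+7) ≤ Q (t+8) := Q_mono.monotone (by omega)
            omega
        · have hbd' : ∀ j ∈ L, 1 ≤ j ∧ j ≤ t + 8 := by
            intro j hj
            have := Finset.le_max' L j hj
            exact ⟨(hbd j hj).1, by omega⟩
          have ihs : ∑ j ∈ L, Q j < Q (t+11) := ih (t+8) (by omega) L hleg hbd'
          have h2 : Q (t+11) < Q (t+12) := Q_lt_succ (t+11)
          omega

set_option maxRecDepth 10000 in
/-- `Q (n+1)` is not a legal sum of terms with indices at most `n`. -/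
lemma norep : ∀ n, 1 ≤ n → ∀ L : Finset ℕ, FQLegal L → (∀ j ∈ L, 1 ≤ j ∧ j ≤ n) →
    ∑ j ∈ L, Q j ≠ Q (n+1) := by
  intro n
  induction n using Nat.strong_induction_on with
  | _ n ih =>
    intro hn L hleg hbd hsum
    by_cases hsm : n ≤ 8
    · have base : ∀ n ∈ Finset.Icc 1 8, ∀ L ∈ (Finset.Icc 1 n).powerset,
          FQLegal L → (∑ j ∈ L, Q j) ≠ Q (n+1) := by decide
      exact base n (by simp; omega) L
        (by rw [Finset.mem_powerset]; intro j hj; rw [Finset.mem_Icc]; exact hbd j hj)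
        hleg hsum
    · push_neg at hsm
      obtain ⟨t, rfl⟩ : ∃ t, n = t + 9 := ⟨n - 9, by omega⟩
      have hsum' : ∑ j ∈ L, Q j = Q (t+10) := hsum
      have hQpos : 0 < Q (t+10) := Q_pos (by omega)
      have e1 : Q (t+10) = Q (t+8) + Q (t+7) := Q_rec (t+4)
      have e3 : Q (t+7) = Q (t+6) + Q (t+2) := Q_diff t
      have e4 : Q (t+10) = Q (t+9) + Q (t+5) := Q_diff (t+3)
      have hLne : L.Nonempty := by
        rcases Finset.eq_empty_or_nonempty L with rfl | h
        · simp at hsum'; omega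
        · exact h
      have hML := L.max'_mem hLne
      have hMle : ∀ j ∈ L, j ≤ L.max' hLne := fun j hj => Finset.le_max' L j hj
      set M := L.max' hLne with hMdef
      have hMk : M ≤ t + 9 := (hbd M hML).2
      have hcase : M = t + 9 ∨ M = t + 8 ∨ M ≤ t + 7 := by omega
      rcases hcase with hM | hM | hM
      · rw [hM] at hML
        have hkey : ∀ j ∈ L.erase (t+9), j = t + 7 ∨ j ≤ t + 4 := by
          intro j hj
          have hjL := Finset.mem_of_mem_erase hj
          have hjne := Finset.ne_of_mem_erase hj
          have hjle : j ≤ t + 9 := by have := hMle j hjL; omega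
          have hp := hleg.1 j hjL (t+9) hML hjne
          omega
        have hsumL : Q (t+9) + ∑ j ∈ L.erase (t+9), Q j = ∑ j ∈ L, Q j :=
          Finset.add_sum_erase L Q hML
        by_cases h7 : t + 7 ∈ L.erase (t+9)
        · have hsumL2 : Q (t+7) + ∑ j ∈ (L.erase (t+9)).erase (t+7), Q j
              = ∑ j ∈ L.erase (t+9), Q j := Finset.add_sum_erase _ Q h7
          have hmono : Q (t+8) < Q (t+9) := Q_lt_succ (t+8)
          omega
        · have hkey2 : ∀ j ∈ L.erase (t+9), j ≤ t + 4 := by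
            intro j hj
            rcases hkey j hj with rfl | h
            · exact absurd hj h7
            · exact h
          have hs' : ∑ j ∈ L.erase (t+9), Q j = Q (t+5) := by omega
          exact ih (t+4) (by omega) (by omega) (L.erase (t+9))
            (FQLegal_subset hleg (Finset.erase_subset _ _))
            (fun j hj => ⟨(hbd j (Finset.mem_of_mem_erase hj)).1, hkey2 j hj⟩) hs'
      · rw [hM] at hML
        have hkey : ∀ j ∈ L.erase (t+8), j = t + 6 ∨ j ≤ t + 3 := by
          intro j hj
          have hjL := Finset.mem_of_mem_erase hj
          have hjne := Finset.ne_of_mem_erase hj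
          have hjle : j ≤ t + 8 := by have := hMle j hjL; rw [hM] at this; omega
          have hp := hleg.1 j hjL (t+8) hML hjne
          omega
        have hsumL : Q (t+8) + ∑ j ∈ L.erase (t+8), Q j = ∑ j ∈ L, Q j :=
          Finset.add_sum_erase L Q hML
        by_cases h6 : t + 6 ∈ L.erase (t+8)
        · have hkey2 : ∀ j ∈ (L.erase (t+8)).erase (t+6), j ≤ t + 1 := by
            intro j hj
            have hj1 := Finset.mem_of_mem_erase hj
            have hjne := Finset.ne_of_mem_erase hj
            have hj4 : j = t + 6 ∨ j ≤ t + 3 := hkey j hj1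
            have hjL := Finset.mem_of_mem_erase hj1
            have h6L := Finset.mem_of_mem_erase h6
            have hp := hleg.1 j hjL (t+6) h6L hjne
            omega
          have hsumL2 : Q (t+6) + ∑ j ∈ (L.erase (t+8)).erase (t+6), Q j
              = ∑ j ∈ L.erase (t+8), Q j := Finset.add_sum_erase _ Q h6
          have hs' : ∑ j ∈ (L.erase (t+8)).erase (t+6), Q j = Q (t+2) := by omega
          exact ih (t+1) (by omega) (by omega) ((L.erase (t+8)).erase (t+6))
            (FQLegal_subset hleg (fun x hx =>
              Finset.mem_of_mem_erase (Finset.mem_of_mem_erase hx)))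
            (fun j hj => ⟨(hbd j (Finset.mem_of_mem_erase (Finset.mem_of_mem_erase hj))).1,
              hkey2 j hj⟩) hs'
        · have hkey2 : ∀ j ∈ L.erase (t+8), j ≤ t + 3 := by
            intro j hj
            rcases hkey j hj with rfl | h
            · exact absurd hj h6
            · exact h
          have hs' : ∑ j ∈ L.erase (t+8), Q j = Q (t+7) := by omega
          exact ih (t+6) (by omega) (by omega) (L.erase (t+8))
            (FQLegal_subset hleg (Finset.erase_subset _ _))
            (fun j hj => ⟨(hbd j (Finset.mem_of_mem_erase hj)).1, by
              have := hkey2 j hj; omega⟩) hs'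
      · have hsb : ∑ j ∈ L, Q j < Q (t+10) :=
          sum_bound (t+7) L hleg (fun j hj => ⟨(hbd j hj).1, by have := hMle j hj; omega⟩)
        omega

lemma FQRepr_Q_of_lt {i m : ℕ} (hm : 0 < m) (hlt : m < Q i) : FQRepr Q i m := by
  obtain ⟨L, hleg, hprop, hsum⟩ := rep m hm
  refine ⟨L, fun j hj => ⟨(hprop j hj).1, ?_⟩, hleg, hsum⟩
  have hj2 : Q j < Q i := lt_of_le_of_lt (hprop j hj).2 hlt
  exact Q_mono.lt_iff_lt.mp hj2

lemma not_FQRepr_Q (i : ℕ) (hi : 2 ≤ i) : ¬ FQRepr Q i (Q i) := by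
  rintro ⟨L, hprop, hleg, hsum⟩
  obtain ⟨t, rfl⟩ : ∃ t, i = t + 2 := ⟨i - 2, by omega⟩
  exact norep (t+1) (by omega) L hleg
    (fun j hj => ⟨(hprop j hj).1, by have := (hprop j hj).2; omega⟩) hsum

lemma q_eq_Q (q : ℕ → ℕ) (hq : IsFQSeq q) : ∀ i, 1 ≤ i → q i = Q i := by
  intro i
  induction i using Nat.strong_induction_on with
  | _ i ih =>
    intro hi
    rcases eq_or_lt_of_le hi with h1 | h2
    · rw [← h1]; exact hq.1
    · have hi2 : 2 ≤ i := h2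
      have hls := hq.2 i hi2
      have hrepr_iff : ∀ m, FQRepr q i m ↔ FQRepr Q i m := by
        intro m
        constructor
        · rintro ⟨L, hprop, hleg, hsum⟩
          refine ⟨L, hprop, hleg, ?_⟩
          rw [← hsum]
          exact Finset.sum_congr rfl (fun j hj =>
            (ih j (hprop j hj).2 (hprop j hj).1).symm)
        · rintro ⟨L, hprop, hleg, hsum⟩
          refine ⟨L, hprop, hleg, ?_⟩
          rw [← hsum]
          exact Finset.sum_congr rfl (fun j hj =>
            ih j (hprop j hj).2 (hprop j hj).1)
      have hmem : Q i ∈ {m : ℕ | 0 < m ∧ ¬ FQRepr q i m} := by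
        refine ⟨Q_pos (by omega), ?_⟩
        rw [hrepr_iff]
        exact not_FQRepr_Q i hi2
      have hle1 : q i ≤ Q i := hls.2 hmem
      have hle2 : Q i ≤ q i := by
        by_contra h
        push_neg at h
        have hpos : 0 < q i := hls.1.1
        have hr : FQRepr Q i (q i) := FQRepr_Q_of_lt hpos h
        exact hls.1.2 ((hrepr_iff _).mpr hr)
      omega

theorem stmt_3 (q : ℕ → ℕ) (hq : IsFQSeq q) :
    ∀ n : ℕ, 5 ≤ n → q (n + 1) = q (n - 1) + q (n - 2) := by
  intro n hn
  obtain ⟨t, rfl⟩ : ∃ t, n = t + 5 := ⟨n - 5, by omega⟩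
  show q (t+6) = q (t+4) + q (t+3)
  rw [q_eq_Q q hq (t+6) (by omega), q_eq_Q q hq (t+4) (by omega),
    q_eq_Q q hq (t+3) (by omega)]
  exact Q_rec t
end

section
/- There exist a constant λ > 1 (λ ≈ 1.05459) and constants C₂ > C₁ > 0 such that for all sufficiently large n, C₁·λ^n ≤ d_{FQ;ave}(n) ≤ C₂·λ^n; in particular the average number of FQ-legal decompositions of integers in [0, q_{n+1}) tends to infinity exponentially fast. -/
open scoped BigOperators

/-- The number of FQ-legal decompositions of `m` (the empty decomposition of `0` counts). -/
noncomputable def dFQ (q : ℕ → ℕ) (m : ℕ) : ℕ :=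
  Nat.card {L : Finset ℕ // (∀ j ∈ L, 1 ≤ j) ∧ FQLegal L ∧ (∑ j ∈ L, q j) = m}

/-- The average number of FQ-legal decompositions of the integers in `[0, q_{n+1})`. -/
noncomputable def dFQave (q : ℕ → ℕ) (n : ℕ) : ℝ :=
  (∑ m ∈ Finset.range (q (n + 1)), (dFQ q m : ℝ)) / (q (n + 1) : ℝ)

set_option maxRecDepth 40000

namespace FQA

instance : DecidablePred FQLegal := fun L => by unfold FQLegal; infer_instance

def qe (n : ℕ) : ℕ := [0,1,2,3,4,5,7,9,12,16,21,28].getD n 0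

theorem legal_subset {L M : Finset ℕ} (h : FQLegal L) (hM : M ⊆ L) : FQLegal M :=
  ⟨fun i hi j hj hij => h.1 i (hM hi) j (hM hj) hij, fun ⟨h1, h3⟩ => h.2 ⟨hM h1, hM h3⟩⟩

theorem repr_mono {q : ℕ → ℕ} {i i' m : ℕ} (h : i ≤ i') : FQRepr q i m → FQRepr q i' m := by
  rintro ⟨L, hb, hl, hs⟩
  exact ⟨L, fun j hj => ⟨(hb j hj).1, lt_of_lt_of_le (hb j hj).2 h⟩, hl, hs⟩

section
variable {q : ℕ → ℕ}

theorem q_pos (hq : IsFQSeq q) {i : ℕ} (hi : 1 ≤ i) : 0 < q i := by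
  rcases Nat.lt_or_ge i 2 with h | h
  · interval_cases i
    · simp [hq.1]
  · exact (hq.2 i h).1.1

theorem not_repr_self (hq : IsFQSeq q) {i : ℕ} (hi : 2 ≤ i) : ¬ FQRepr q i (q i) := (hq.2 i hi).1.2

theorem repr_of_lt (hq : IsFQSeq q) {i m : ℕ} (hi : 2 ≤ i) (h0 : 0 < m) (hm : m < q i) : FQRepr q i m := by
  by_contra h
  have := (hq.2 i hi).2 (Set.mem_setOf.2 ⟨h0, h⟩); omega

theorem q_le_of_not_repr (hq : IsFQSeq q) {i x : ℕ} (hi : 2 ≤ i) (h0 : 0 < x) (hx : ¬ FQRepr q i x) :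
    q i ≤ x := (hq.2 i hi).2 ⟨h0, hx⟩

theorem pin (hq : IsFQSeq q) {i x : ℕ} (hi : 2 ≤ i) (h0 : 0 < x) (hx : ¬ FQRepr q i x)
    (hall : ∀ m, 0 < m → m < x → FQRepr q i m) : q i = x := by
  have h1 := q_le_of_not_repr hq hi h0 hx
  rcases Nat.lt_or_ge (q i) x with h | h
  · exact absurd (hall _ (q_pos hq (by omega)) h) (not_repr_self hq hi)
  · omega

theorem repr_iff_qe {i m : ℕ} (hi : 1 ≤ i)
    (hv : ∀ j, 1 ≤ j → j < i → q j = qe j) :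
    FQRepr q i m ↔ ∃ L ∈ (Finset.Icc 1 (i-1)).powerset, FQLegal L ∧ (∑ j ∈ L, qe j) = m := by
  constructor
  · rintro ⟨L, hb, hl, hs⟩
    refine ⟨L, Finset.mem_powerset.2 fun j hj => Finset.mem_Icc.2 (by have := hb j hj; omega),
      hl, ?_⟩
    rw [← hs]
    exact Finset.sum_congr rfl fun j hj => (hv j (hb j hj).1 (hb j hj).2).symm
  · rintro ⟨L, hb, hl, hs⟩
    have hb' := Finset.mem_powerset.1 hb
    refine ⟨L, fun j hj => by have := Finset.mem_Icc.1 (hb' hj); omega, hl, ?_⟩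
    rw [← hs]
    refine Finset.sum_congr rfl fun j hj => hv j ?_ ?_
    · exact (Finset.mem_Icc.1 (hb' hj)).1
    · have := (Finset.mem_Icc.1 (hb' hj)).2; omega

end

section
variable {q : ℕ → ℕ}

-- base values
theorem qv2 (hq : IsFQSeq q) : q 2 = 2 := by
  have hv : ∀ j, 1 ≤ j → j < 2 → q j = qe j := by
    intro j h1 h2; interval_cases j; exact hq.1
  refine pin hq (by norm_num) (by norm_num) ?_ ?_
  · rw [repr_iff_qe (by norm_num) hv]; decide
  · intro m h0 hm; rw [repr_iff_qe (by norm_num) hv]; interval_cases m; decide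

theorem qv3 (hq : IsFQSeq q) : q 3 = 3 := by
  have hv : ∀ j, 1 ≤ j → j < 3 → q j = qe j := by
    intro j h1 h2; interval_cases j
    · exact hq.1
    · exact qv2 hq
  refine pin hq (by norm_num) (by norm_num) ?_ ?_
  · rw [repr_iff_qe (by norm_num) hv]; decide
  · intro m h0 hm; rw [repr_iff_qe (by norm_num) hv]; interval_cases m <;> decide

theorem qv4 (hq : IsFQSeq q) : q 4 = 4 := by
  have hv : ∀ j, 1 ≤ j → j < 4 → q j = qe j := by
    intro j h1 h2; interval_cases j
    · exact hq.1
    · exact qv2 hq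
    · exact qv3 hq
  refine pin hq (by norm_num) (by norm_num) ?_ ?_
  · rw [repr_iff_qe (by norm_num) hv]; decide
  · intro m h0 hm; rw [repr_iff_qe (by norm_num) hv]; interval_cases m <;> decide

theorem qv5 (hq : IsFQSeq q) : q 5 = 5 := by
  have hv : ∀ j, 1 ≤ j → j < 5 → q j = qe j := by
    intro j h1 h2; interval_cases j
    · exact hq.1
    · exact qv2 hq
    · exact qv3 hq
    · exact qv4 hq
  refine pin hq (by norm_num) (by norm_num) ?_ ?_
  · rw [repr_iff_qe (by norm_num) hv]; decide
  · intro m h0 hm; rw [repr_iff_qe (by norm_num) hv]; interval_cases m <;> decide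

theorem qv6 (hq : IsFQSeq q) : q 6 = 7 := by
  have hv : ∀ j, 1 ≤ j → j < 6 → q j = qe j := by
    intro j h1 h2; interval_cases j
    · exact hq.1
    · exact qv2 hq
    · exact qv3 hq
    · exact qv4 hq
    · exact qv5 hq
  refine pin hq (by norm_num) (by norm_num) ?_ ?_
  · rw [repr_iff_qe (by norm_num) hv]; decide
  · intro m h0 hm; rw [repr_iff_qe (by norm_num) hv]; interval_cases m <;> decide

theorem qv7 (hq : IsFQSeq q) : q 7 = 9 := by
  have hv : ∀ j, 1 ≤ j → j < 7 → q j = qe j := by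
    intro j h1 h2; interval_cases j
    · exact hq.1
    · exact qv2 hq
    · exact qv3 hq
    · exact qv4 hq
    · exact qv5 hq
    · exact qv6 hq
  refine pin hq (by norm_num) (by norm_num) ?_ ?_
  · rw [repr_iff_qe (by norm_num) hv]; decide
  · intro m h0 hm; rw [repr_iff_qe (by norm_num) hv]; interval_cases m <;> decide
end

section
variable {q : ℕ → ℕ}

theorem qv8 (hq : IsFQSeq q) : q 8 = 12 := by
  have hv : ∀ j, 1 ≤ j → j < 8 → q j = qe j := by
    intro j h1 h2; interval_cases j
    · exact hq.1
    · exact qv2 hq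
    · exact qv3 hq
    · exact qv4 hq
    · exact qv5 hq
    · exact qv6 hq
    · exact qv7 hq
  refine pin hq (by norm_num) (by norm_num) ?_ ?_
  · rw [repr_iff_qe (by norm_num) hv]; decide
  · intro m h0 hm
    rcases Nat.lt_or_ge m 9 with h | h
    · exact repr_mono (by norm_num) (repr_of_lt hq (i := 7) (by norm_num) h0 (by rw [qv7 hq]; omega))
    · rw [repr_iff_qe (by norm_num) hv]
      interval_cases m
      · exact ⟨{7}, by decide, by decide, by decide⟩
      · exact ⟨{1,7}, by decide, by decide, by decide⟩
      · exact ⟨{4,6}, by decide, by decide, by decide⟩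

theorem qv9 (hq : IsFQSeq q) : q 9 = 16 := by
  have hv : ∀ j, 1 ≤ j → j < 9 → q j = qe j := by
    intro j h1 h2; interval_cases j
    · exact hq.1
    · exact qv2 hq
    · exact qv3 hq
    · exact qv4 hq
    · exact qv5 hq
    · exact qv6 hq
    · exact qv7 hq
    · exact qv8 hq
  refine pin hq (by norm_num) (by norm_num) ?_ ?_
  · rw [repr_iff_qe (by norm_num) hv]; decide
  · intro m h0 hm
    rcases Nat.lt_or_ge m 12 with h | h
    · exact repr_mono (by norm_num) (repr_of_lt hq (i := 8) (by norm_num) h0 (by rw [qv8 hq]; omega))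
    · rw [repr_iff_qe (by norm_num) hv]
      interval_cases m
      · exact ⟨{8}, by decide, by decide, by decide⟩
      · exact ⟨{1,8}, by decide, by decide, by decide⟩
      · exact ⟨{2,8}, by decide, by decide, by decide⟩
      · exact ⟨{3,8}, by decide, by decide, by decide⟩

theorem qv10 (hq : IsFQSeq q) : q 10 = 21 := by
  have hv : ∀ j, 1 ≤ j → j < 10 → q j = qe j := by
    intro j h1 h2; interval_cases j
    · exact hq.1
    · exact qv2 hq
    · exact qv3 hq
    · exact qv4 hq
    · exact qv5 hq
    · exact qv6 hq
    · exact qv7 hq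
    · exact qv8 hq
    · exact qv9 hq
  refine pin hq (by norm_num) (by norm_num) ?_ ?_
  · rw [repr_iff_qe (by norm_num) hv]; decide
  · intro m h0 hm
    rcases Nat.lt_or_ge m 16 with h | h
    · exact repr_mono (by norm_num) (repr_of_lt hq (i := 9) (by norm_num) h0 (by rw [qv9 hq]; omega))
    · rw [repr_iff_qe (by norm_num) hv]
      interval_cases m
      · exact ⟨{9}, by decide, by decide, by decide⟩
      · exact ⟨{1,9}, by decide, by decide, by decide⟩
      · exact ⟨{2,9}, by decide, by decide, by decide⟩
      · exact ⟨{3,9}, by decide, by decide, by decide⟩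
      · exact ⟨{4,9}, by decide, by decide, by decide⟩

theorem qv11 (hq : IsFQSeq q) : q 11 = 28 := by
  have hv : ∀ j, 1 ≤ j → j < 11 → q j = qe j := by
    intro j h1 h2; interval_cases j
    · exact hq.1
    · exact qv2 hq
    · exact qv3 hq
    · exact qv4 hq
    · exact qv5 hq
    · exact qv6 hq
    · exact qv7 hq
    · exact qv8 hq
    · exact qv9 hq
    · exact qv10 hq
  refine pin hq (by norm_num) (by norm_num) ?_ ?_
  · rw [repr_iff_qe (by norm_num) hv]
    have neg9 : ¬ ∃ L ∈ (Finset.Icc 1 9).powerset, FQLegal L ∧ (∑ j ∈ L, qe j) = 28 := by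
      decide
    have neg10 : ¬ ∃ L ∈ (Finset.Icc 1 9).powerset, FQLegal (insert 10 L) ∧
        (∑ j ∈ L, qe j) = 7 := by decide
    rintro ⟨L, hP, hl, hs⟩
    have hsub := Finset.mem_powerset.1 hP
    by_cases h10 : 10 ∈ L
    · have hsub' : L.erase 10 ⊆ Finset.Icc 1 9 := by
        intro x hx
        have hx1 := Finset.mem_of_mem_erase hx
        have hx2 := Finset.ne_of_mem_erase hx
        have := Finset.mem_Icc.1 (hsub hx1)
        exact Finset.mem_Icc.2 (by omega)
      have hs' : (∑ j ∈ L.erase 10, qe j) = 7 := by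
        have h := Finset.add_sum_erase L qe h10
        rw [hs] at h
        have : qe 10 = 21 := by decide
        omega
      refine neg10 ⟨L.erase 10, Finset.mem_powerset.2 hsub', ?_, hs'⟩
      rwa [Finset.insert_erase h10]
    · have hsub' : L ⊆ Finset.Icc 1 9 := by
        intro x hx
        have := Finset.mem_Icc.1 (hsub hx)
        have : x ≠ 10 := fun h => h10 (h ▸ hx)
        have := Finset.mem_Icc.1 (hsub hx)
        exact Finset.mem_Icc.2 (by omega)
      exact neg9 ⟨L, Finset.mem_powerset.2 hsub', hl, hs⟩
  · intro m h0 hm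
    rcases Nat.lt_or_ge m 21 with h | h
    · exact repr_mono (by norm_num) (repr_of_lt hq (i := 10) (by norm_num) h0 (by rw [qv10 hq]; omega))
    · rw [repr_iff_qe (by norm_num) hv]
      interval_cases m
      · exact ⟨{10}, by decide, by decide, by decide⟩
      · exact ⟨{1,10}, by decide, by decide, by decide⟩
      · exact ⟨{2,10}, by decide, by decide, by decide⟩
      · exact ⟨{3,10}, by decide, by decide, by decide⟩
      · exact ⟨{4,10}, by decide, by decide, by decide⟩
      · exact ⟨{5,10}, by decide, by decide, by decide⟩
      · exact ⟨{2,4,10}, by decide, by decide, by decide⟩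

theorem qval (hq : IsFQSeq q) : ∀ j, 1 ≤ j → j ≤ 11 → q j = qe j := by
  intro j h1 h2; interval_cases j
  · exact hq.1
  · exact qv2 hq
  · exact qv3 hq
  · exact qv4 hq
  · exact qv5 hq
  · exact qv6 hq
  · exact qv7 hq
  · exact qv8 hq
  · exact qv9 hq
  · exact qv10 hq
  · exact qv11 hq
end

section
variable {q : ℕ → ℕ}

theorem legal_singleton (a : ℕ) : FQLegal {a} := by
  constructor
  · intro i hi j hj hij
    simp only [Finset.mem_singleton] at hi hj
    omega
  · intro ⟨h1, h3⟩
    simp only [Finset.mem_singleton] at h1 h3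
    omega

theorem diffs {L : Finset ℕ} {x y : ℕ} (hl : FQLegal L) (hx : x ∈ L) (hy : y ∈ L)
    (h : x < y) : y - x ≠ 1 ∧ y - x ≠ 3 ∧ y - x ≠ 4 := by
  have := hl.1 y hy x hx (by omega)
  rwa [Nat.max_eq_left h.le, Nat.min_eq_right h.le] at this

theorem q_lt_succ (hq : IsFQSeq q) {i : ℕ} (hi : 1 ≤ i) : q i < q (i + 1) := by
  rcases Nat.lt_or_ge i 2 with h | h
  · interval_cases i
    rw [hq.1, qv2 hq]; omega
  · have hrep : FQRepr q (i+1) (q i) :=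
      ⟨{i}, fun j hj => by simp only [Finset.mem_singleton] at hj; omega,
        legal_singleton i, Finset.sum_singleton _ _⟩
    have hne : q (i+1) ≠ q i := by
      intro he
      exact not_repr_self hq (by omega) (he ▸ hrep)
    rcases Nat.lt_or_ge (q i) (q (i+1)) with h' | h'
    · exact h'
    · have h'' : q (i+1) < q i := by omega
      have := repr_of_lt hq (i := i) h (q_pos hq (by omega)) h''
      exact absurd (repr_mono (by omega) this) (not_repr_self hq (by omega))

theorem q_mono (hq : IsFQSeq q) {i j : ℕ} (hi : 1 ≤ i) (hij : i ≤ j) : q i ≤ q j := by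
  induction j, hij using Nat.le_induction with
  | base => exact le_refl _
  | succ n hn ih => exact le_trans ih (q_lt_succ hq (by omega)).le

theorem q_strict_mono (hq : IsFQSeq q) {i j : ℕ} (hi : 1 ≤ i) (hij : i < j) : q i < q j :=
  lt_of_lt_of_le (q_lt_succ hq hi) (q_mono hq (by omega) (by omega))

theorem legal_insert_top {L : Finset ℕ} {b a : ℕ} (hL : FQLegal L)
    (hbnd : ∀ j ∈ L, j ≤ b) (hab : b + 5 ≤ a) (ha4 : 4 ≤ a) : FQLegal (insert a L) := by
  constructor
  · intro i hi j hj hij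
    rcases Finset.mem_insert.1 hi with rfl | hi'
    · rcases Finset.mem_insert.1 hj with rfl | hj'
      · omega
      · have := hbnd j hj'
        rw [Nat.max_eq_left (by omega), Nat.min_eq_right (by omega)]
        omega
    · rcases Finset.mem_insert.1 hj with rfl | hj'
      · have := hbnd i hi'
        rw [Nat.max_eq_right (by omega), Nat.min_eq_left (by omega)]
        omega
      · exact hL.1 i hi' j hj' hij
  · intro ⟨h1, h3⟩
    rcases Finset.mem_insert.1 h1 with h | h1'
    · omega
    · rcases Finset.mem_insert.1 h3 with h | h3'
      · omega
      · exact hL.2 ⟨h1', h3'⟩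

theorem R1ge (hq : IsFQSeq q) (t : ℕ) : q (t+6) + q (t+2) ≤ q (t+7) := by
  by_contra hcon
  push_neg at hcon
  have hrep : FQRepr q (t+7) (q (t+7)) := by
    have h0 : 0 < q (t+7) := q_pos hq (by omega)
    rcases lt_trichotomy (q (t+7)) (q (t+6)) with h | h | h
    · exact repr_mono (by omega) (repr_of_lt hq (i := t+6) (by omega) h0 h)
    · exact ⟨{t+6}, fun j hj => by simp only [Finset.mem_singleton] at hj; omega,
        legal_singleton _, by rw [Finset.sum_singleton, h]⟩
    · have hr0 : 0 < q (t+7) - q (t+6) := by omega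
      have hrlt : q (t+7) - q (t+6) < q (t+2) := by omega
      obtain ⟨L, hb, hl, hs⟩ := repr_of_lt hq (i := t+2) (by omega) hr0 hrlt
      have hbnd : ∀ j ∈ L, j ≤ t + 1 := fun j hj => by have := hb j hj; omega
      have hnotin : (t+6) ∉ L := fun h' => by have := hbnd _ h'; omega
      refine ⟨insert (t+6) L, ?_, legal_insert_top hl hbnd (by omega) (by omega), ?_⟩
      · intro j hj
        rcases Finset.mem_insert.1 hj with rfl | hj'
        · omega
        · have := hb j hj'; omega
      · rw [Finset.sum_insert hnotin, hs]
        omega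
  exact not_repr_self hq (by omega) hrep

def Aq (q : ℕ → ℕ) : ℕ → ℕ
  | 0 => 0
  | 1 => q 1
  | (n+2) => q (n+2) + Aq q n

theorem Aq_mono (hq : IsFQSeq q) : ∀ n, Aq q n ≤ Aq q (n+1) := by
  intro n
  induction n using Nat.strong_induction_on with
  | _ n ih =>
    match n with
    | 0 => simp [Aq]
    | 1 =>
      show q 1 ≤ q 2 + Aq q 0
      have := q_mono hq (i := 1) (j := 2) (by omega) (by omega)
      simp only [Aq]; omega
    | (m+2) =>
      show q (m+2) + Aq q m ≤ q (m+3) + Aq q (m+1)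
      have h1 := ih m (by omega)
      have h2 := q_mono hq (i := m+2) (j := m+3) (by omega) (by omega)
      omega

theorem sum_le_A (hq : IsFQSeq q) : ∀ n (L : Finset ℕ), FQLegal L →
    (∀ j ∈ L, 1 ≤ j ∧ j ≤ n) → (∑ j ∈ L, q j) ≤ Aq q n := by
  intro n
  induction n using Nat.strong_induction_on with
  | _ n ih =>
    intro L hl hbnd
    match n with
    | 0 =>
      have : L = ∅ := Finset.eq_empty_of_forall_notMem fun x hx => by
        have := hbnd x hx; omega
      simp [this, Aq]
    | 1 =>
      by_cases h1 : 1 ∈ L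
      · have : L = {1} := by
          apply Finset.eq_singleton_iff_unique_mem.2
          exact ⟨h1, fun x hx => by have := hbnd x hx; omega⟩
        simp [this, Aq]
      · have : L = ∅ := Finset.eq_empty_of_forall_notMem fun x hx => by
          have := hbnd x hx
          have : x = 1 := by omega
          exact h1 (this ▸ hx)
        simp [this, Aq]
    | (m+2) =>
      by_cases h : (m+2) ∈ L
      · have hbnd' : ∀ j ∈ L.erase (m+2), 1 ≤ j ∧ j ≤ m := by
          intro j hj
          have hj1 := Finset.mem_of_mem_erase hj
          have hj2 := Finset.ne_of_mem_erase hj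
          have hb := hbnd j hj1
          have hne1 : j ≠ m + 1 := by
            intro he
            have := diffs hl (he ▸ hj1) h (by omega)
            omega
          omega
        have hsub := ih m (by omega) (L.erase (m+2))
          (legal_subset hl (Finset.erase_subset _ _)) hbnd'
        have hsum := Finset.add_sum_erase L q h
        simp only [Aq]
        omega
      · have hbnd' : ∀ j ∈ L, 1 ≤ j ∧ j ≤ m + 1 := by
          intro j hj
          have := hbnd j hj
          have : j ≠ m + 2 := fun he => h (he ▸ hj)
          omega
        exact le_trans (ih (m+1) (by omega) L hl hbnd') (Aq_mono hq _)

theorem Mlem (hq : IsFQSeq q) : ∀ k (L : Finset ℕ), FQLegal L →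
    (∀ j ∈ L, 1 ≤ j ∧ j ≤ k + 1) → (∑ j ∈ L, q j) < q (k+4) + q k := by
  intro k
  induction k using Nat.strong_induction_on with
  | _ k ih =>
    intro L hl hbnd
    rcases Nat.lt_or_ge k 11 with hk | hk
    · -- base cases via the A-bound
      have hA := sum_le_A hq (k+1) L hl hbnd
      have e1 := hq.1
      have e2 := qv2 hq; have e3 := qv3 hq; have e4 := qv4 hq; have e5 := qv5 hq
      have e6 := qv6 hq; have e7 := qv7 hq; have e8 := qv8 hq; have e9 := qv9 hq
      have e10 := qv10 hq; have e11 := qv11 hq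
      have h12 := R1ge hq 5
      have h13 := R1ge hq 6
      have h14 := R1ge hq 7
      have h0 : 0 ≤ q 0 := Nat.zero_le _
      interval_cases k <;>
        (simp only [Aq] at hA) <;>
        (simp only [Nat.add_assoc, Nat.reduceAdd] at hA h12 h13 h14 ⊢) <;> omega
    · -- inductive step
      obtain ⟨j, rfl⟩ : ∃ j, k = j + 11 := ⟨k - 11, by omega⟩
      by_cases hK : (j+12) ∈ L
      · by_cases hK2 : (j+10) ∈ L
        · have hbnd2 : ∀ x ∈ (L.erase (j+12)).erase (j+10), 1 ≤ x ∧ x ≤ j + 5 := by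
            intro x hx
            have hx10 : x ≠ j + 10 := Finset.ne_of_mem_erase hx
            have hx' := Finset.mem_of_mem_erase hx
            have hx12 : x ≠ j + 12 := Finset.ne_of_mem_erase hx'
            have hxL : x ∈ L := Finset.mem_of_mem_erase hx'
            have hb := hbnd x hxL
            have hd1 : x < j + 12 := by omega
            have := diffs hl hxL hK hd1
            rcases Nat.lt_or_ge x (j+10) with h' | h'
            · have := diffs hl hxL hK2 h'
              omega
            · omega
          have hIH := ih (j+4) (by omega) ((L.erase (j+12)).erase (j+10)) (legal_subset hl
            (Finset.Subset.trans (Finset.erase_subset _ _) (Finset.erase_subset _ _))) hbnd2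
          have hsum1 := Finset.add_sum_erase L q hK
          have hmem2 : (j+10) ∈ L.erase (j+12) := Finset.mem_erase.2 ⟨by omega, hK2⟩
          have hsum2 := Finset.add_sum_erase (L.erase (j+12)) q hmem2
          have cA := R1ge hq (j+8)
          have cB := R1ge hq (j+7)
          have cC := R1ge hq (j+6)
          have m1 := q_mono hq (i := j+4) (j := j+9) (by omega) (by omega)
          simp only [Nat.add_assoc, Nat.reduceAdd] at hIH hsum1 hsum2 cA cB cC m1 ⊢
          omega
        · have hbnd1 : ∀ x ∈ L.erase (j+12), 1 ≤ x ∧ x ≤ j + 7 := by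
            intro x hx
            have hx12 : x ≠ j + 12 := Finset.ne_of_mem_erase hx
            have hxL : x ∈ L := Finset.mem_of_mem_erase hx
            have hb := hbnd x hxL
            have hd1 : x < j + 12 := by omega
            have := diffs hl hxL hK hd1
            have hx10 : x ≠ j + 10 := fun he => hK2 (he ▸ hxL)
            omega
          have hIH := ih (j+6) (by omega) (L.erase (j+12)) (legal_subset hl (Finset.erase_subset _ _)) hbnd1
          have hsum1 := Finset.add_sum_erase L q hK
          have cA := R1ge hq (j+8)
          have cB := R1ge hq (j+7)
          have cC := R1ge hq (j+6)
          have m1 := q_mono hq (i := j+6) (j := j+11) (by omega) (by omega)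
          simp only [Nat.add_assoc, Nat.reduceAdd] at hIH hsum1 cA cB cC m1 ⊢
          omega
      · have hbnd1 : ∀ x ∈ L, 1 ≤ x ∧ x ≤ j + 11 := by
          intro x hx
          have hb := hbnd x hx
          have : x ≠ j + 12 := fun he => hK (he ▸ hx)
          omega
        have hIH := ih (j+10) (by omega) L hl hbnd1
        have m1 := q_mono hq (i := j+14) (j := j+15) (by omega) (by omega)
        have m2 := q_mono hq (i := j+10) (j := j+11) (by omega) (by omega)
        simp only [Nat.add_assoc, Nat.reduceAdd] at hIH m1 m2 ⊢
        omega

theorem R2aux (hq : IsFQSeq q) {J : ℕ}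
    (h1 : ∀ m, m ≤ J → q (m+7) = q (m+6) + q (m+2)) :
    ∀ m, m ≤ J → q (m+7) = q (m+5) + q (m+4) := by
  intro m
  induction m using Nat.strong_induction_on with
  | _ m ih =>
    intro hm
    match m with
    | 0 =>
      have e4 := qv4 hq; have e5 := qv5 hq; have e7 := qv7 hq
      simp only [Nat.reduceAdd]
      omega
    | 1 =>
      have e5 := qv5 hq; have e6 := qv6 hq; have e8 := qv8 hq
      simp only [Nat.reduceAdd]
      omega
    | (s+2) =>
      have hA := h1 (s+2) hm
      have hB := ih (s+1) (by omega) (by omega)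
      have hC := ih s (by omega) (by omega)
      simp only [Nat.add_assoc, Nat.reduceAdd] at hA hB hC ⊢
      omega

theorem R1eq (hq : IsFQSeq q) : ∀ t, q (t+7) = q (t+6) + q (t+2) := by
  intro t
  induction t using Nat.strong_induction_on with
  | _ t ih =>
    rcases Nat.lt_or_ge t 5 with ht | ht
    · have e2 := qv2 hq; have e3 := qv3 hq; have e4 := qv4 hq; have e5 := qv5 hq
      have e6 := qv6 hq; have e7 := qv7 hq; have e8 := qv8 hq; have e9 := qv9 hq
      have e10 := qv10 hq; have e11 := qv11 hq
      interval_cases t <;> (simp only [Nat.reduceAdd]; omega)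
    · obtain ⟨s, rfl⟩ : ∃ s, t = s + 5 := ⟨t - 5, by omega⟩
      have hR1 : ∀ m, m ≤ s + 4 → q (m+7) = q (m+6) + q (m+2) := fun m hm => ih m (by omega)
      have hR2 := R2aux hq hR1
      have hge := R1ge hq (s+5)
      have hle : q (s+5+7) ≤ q (s+5+6) + q (s+5+2) := by
        have hx0 : 0 < q (s+11) + q (s+7) :=
          Nat.add_pos_left (q_pos hq (by omega)) _
        have hnr : ¬ FQRepr q (s+12) (q (s+11) + q (s+7)) := by
          rintro ⟨L, hb, hl, hs⟩
          have hne : L.Nonempty := by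
            rcases L.eq_empty_or_nonempty with rfl | h
            · simp at hs; omega
            · exact h
          have hamem := L.max'_mem hne
          have hmax : ∀ x ∈ L, x ≤ L.max' hne := fun x hx => L.le_max' x hx
          have ha := hb _ hamem
          rcases Nat.lt_or_ge (L.max' hne) (s+9) with hc | hc
          · -- small max: use Mlem
            have hbnd : ∀ j ∈ L, 1 ≤ j ∧ j ≤ (s+7) + 1 := by
              intro j hj
              have h1 := (hb j hj).1
              have h2 := hmax j hj
              omega
            have := Mlem hq (s+7) L hl hbnd
            simp only [Nat.add_assoc, Nat.reduceAdd] at this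
            omega
          · have hcc : L.max' hne = s+9 ∨ L.max' hne = s+10 ∨ L.max' hne = s+11 := by omega
            rcases hcc with hc' | hc' | hc'
            · -- max = s+9
              rw [hc'] at hamem hmax
              by_cases h7 : (s+7) ∈ L
              · have hbnd2 : ∀ x ∈ (L.erase (s+9)).erase (s+7), 1 ≤ x ∧ x ≤ s+2 := by
                  intro x hx
                  have hx7 : x ≠ s + 7 := Finset.ne_of_mem_erase hx
                  have hx' := Finset.mem_of_mem_erase hx
                  have hx9 : x ≠ s + 9 := Finset.ne_of_mem_erase hx'
                  have hxL : x ∈ L := Finset.mem_of_mem_erase hx'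
                  have hb1 := (hb x hxL).1
                  have hm1 := hmax x hxL
                  have hd9 := diffs hl hxL hamem (by omega)
                  rcases Nat.lt_or_ge x (s+7) with h' | h'
                  · have hd7 := diffs hl hxL h7 h'
                    omega
                  · omega
                have hsum1 := Finset.add_sum_erase L q hamem
                have hmem2 : (s+7) ∈ L.erase (s+9) := Finset.mem_erase.2 ⟨by omega, h7⟩
                have hsum2 := Finset.add_sum_erase (L.erase (s+9)) q hmem2
                have hid := hR2 (s+4) (by omega)
                simp only [Nat.add_assoc, Nat.reduceAdd] at hsum1 hsum2 hid
                have hfin : (∑ x ∈ (L.erase (s+9)).erase (s+7), q x) = q (s+8) := by omega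
                exact not_repr_self hq (i := s+8) (by omega)
                  ⟨_, fun j hj => ⟨(hbnd2 j hj).1, by have := (hbnd2 j hj).2; omega⟩,
                    legal_subset hl (Finset.Subset.trans (Finset.erase_subset _ _)
                      (Finset.erase_subset _ _)), hfin⟩
              · have hbnd1 : ∀ x ∈ L.erase (s+9), 1 ≤ x ∧ x ≤ s+4 := by
                  intro x hx
                  have hx9 : x ≠ s + 9 := Finset.ne_of_mem_erase hx
                  have hxL : x ∈ L := Finset.mem_of_mem_erase hx
                  have hb1 := (hb x hxL).1
                  have hm1 := hmax x hxL
                  have hd9 := diffs hl hxL hamem (by omega)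
                  have hx7 : x ≠ s + 7 := fun he => h7 (he ▸ hxL)
                  omega
                have hsum1 := Finset.add_sum_erase L q hamem
                have hid1 := hR2 (s+4) (by omega)
                have hid2 := hR2 (s+3) (by omega)
                simp only [Nat.add_assoc, Nat.reduceAdd] at hsum1 hid1 hid2
                have hfin : (∑ x ∈ L.erase (s+9), q x) = q (s+10) := by omega
                exact not_repr_self hq (i := s+10) (by omega)
                  ⟨_, fun j hj => ⟨(hbnd1 j hj).1, by have := (hbnd1 j hj).2; omega⟩,
                    legal_subset hl (Finset.erase_subset _ _), hfin⟩
            · -- max = s+10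
              rw [hc'] at hamem hmax
              by_cases h8 : (s+8) ∈ L
              · have hbnd2 : ∀ x ∈ (L.erase (s+10)).erase (s+8), 1 ≤ x ∧ x ≤ s+3 := by
                  intro x hx
                  have hx8 : x ≠ s + 8 := Finset.ne_of_mem_erase hx
                  have hx' := Finset.mem_of_mem_erase hx
                  have hx10 : x ≠ s + 10 := Finset.ne_of_mem_erase hx'
                  have hxL : x ∈ L := Finset.mem_of_mem_erase hx'
                  have hb1 := (hb x hxL).1
                  have hm1 := hmax x hxL
                  have hd10 := diffs hl hxL hamem (by omega)
                  rcases Nat.lt_or_ge x (s+8) with h' | h'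
                  · have hd8 := diffs hl hxL h8 h'
                    omega
                  · omega
                have hsum1 := Finset.add_sum_erase L q hamem
                have hmem2 : (s+8) ∈ L.erase (s+10) := Finset.mem_erase.2 ⟨by omega, h8⟩
                have hsum2 := Finset.add_sum_erase (L.erase (s+10)) q hmem2
                have hid1 := hR1 (s+4) (by omega)
                have hid2 := hR2 (s+2) (by omega)
                have hid3 := hR1 (s+2) (by omega)
                simp only [Nat.add_assoc, Nat.reduceAdd] at hsum1 hsum2 hid1 hid2 hid3
                have hfin : (∑ x ∈ (L.erase (s+10)).erase (s+8), q x) = q (s+4) := by omega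
                exact not_repr_self hq (i := s+4) (by omega)
                  ⟨_, fun j hj => ⟨(hbnd2 j hj).1, by have := (hbnd2 j hj).2; omega⟩,
                    legal_subset hl (Finset.Subset.trans (Finset.erase_subset _ _)
                      (Finset.erase_subset _ _)), hfin⟩
              · have hbnd1 : ∀ x ∈ L.erase (s+10), 1 ≤ x ∧ x ≤ s+5 := by
                  intro x hx
                  have hx10 : x ≠ s + 10 := Finset.ne_of_mem_erase hx
                  have hxL : x ∈ L := Finset.mem_of_mem_erase hx
                  have hb1 := (hb x hxL).1
                  have hm1 := hmax x hxL
                  have hd10 := diffs hl hxL hamem (by omega)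
                  have hx8 : x ≠ s + 8 := fun he => h8 (he ▸ hxL)
                  omega
                have hsum1 := Finset.add_sum_erase L q hamem
                have hid1 := hR1 (s+4) (by omega)
                have hid2 := hR2 (s+2) (by omega)
                simp only [Nat.add_assoc, Nat.reduceAdd] at hsum1 hid1 hid2
                have hfin : (∑ x ∈ L.erase (s+10), q x) = q (s+9) := by omega
                exact not_repr_self hq (i := s+9) (by omega)
                  ⟨_, fun j hj => ⟨(hbnd1 j hj).1, by have := (hbnd1 j hj).2; omega⟩,
                    legal_subset hl (Finset.erase_subset _ _), hfin⟩
            · -- max = s+11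
              rw [hc'] at hamem hmax
              by_cases h9 : (s+9) ∈ L
              · have hpair : ({s+11, s+9} : Finset ℕ) ⊆ L := by
                  intro x hx
                  rcases Finset.mem_insert.1 hx with rfl | hx'
                  · exact hamem
                  · rw [Finset.mem_singleton.1 hx']; exact h9
                have hple := Finset.sum_le_sum_of_subset hpair (f := q)
                rw [Finset.sum_pair (by omega)] at hple
                have hmono := q_strict_mono hq (i := s+7) (j := s+9) (by omega) (by omega)
                omega
              · have hbnd1 : ∀ x ∈ L.erase (s+11), 1 ≤ x ∧ x ≤ s+6 := by
                  intro x hx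
                  have hx11 : x ≠ s + 11 := Finset.ne_of_mem_erase hx
                  have hxL : x ∈ L := Finset.mem_of_mem_erase hx
                  have hb1 := (hb x hxL).1
                  have hm1 := hmax x hxL
                  have hd11 := diffs hl hxL hamem (by omega)
                  have hx9 : x ≠ s + 9 := fun he => h9 (he ▸ hxL)
                  omega
                have hsum1 := Finset.add_sum_erase L q hamem
                have hfin : (∑ x ∈ L.erase (s+11), q x) = q (s+7) := by omega
                exact not_repr_self hq (i := s+7) (by omega)
                  ⟨_, fun j hj => ⟨(hbnd1 j hj).1, by have := (hbnd1 j hj).2; omega⟩,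
                    legal_subset hl (Finset.erase_subset _ _), hfin⟩
        have := q_le_of_not_repr hq (i := s+12) (by omega) hx0 hnr
        simp only [Nat.add_assoc, Nat.reduceAdd] at *
        omega
      omega

theorem sum_Icc_q (hq : IsFQSeq q) : ∀ m, (∑ j ∈ Finset.Icc 1 (m+1), q j) + 6 ≤ q (m+6) := by
  intro m
  induction m with
  | zero =>
    have : Finset.Icc 1 1 = {1} := Finset.Icc_self 1
    rw [this, Finset.sum_singleton, hq.1, qv6 hq]
  | succ n ih =>
    have hs : (∑ j ∈ Finset.Icc 1 (n+1+1), q j) =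
        (∑ j ∈ Finset.Icc 1 (n+1), q j) + q (n+2) := by
      rw [← Finset.sum_Icc_succ_top (by omega : 1 ≤ n+1+1)]
    have hr := R1ge hq n
    simp only [Nat.add_assoc, Nat.reduceAdd] at *
    omega

end

def DLegal (L : Finset ℕ) : Prop :=
  ∀ i ∈ L, ∀ j ∈ L, i ≠ j →
    max i j - min i j ≠ 1 ∧ max i j - min i j ≠ 3 ∧ max i j - min i j ≠ 4

instance : DecidablePred DLegal := fun L => by unfold DLegal; infer_instance

theorem dlegal_iff {L : Finset ℕ} : DLegal L ↔
    ∀ i ∈ L, ∀ j ∈ L, i < j → (j ≠ i+1 ∧ j ≠ i+3 ∧ j ≠ i+4) := by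
  constructor
  · intro h i hi j hj hij
    have := h i hi j hj (by omega)
    rw [Nat.max_eq_right hij.le, Nat.min_eq_left hij.le] at this
    omega
  · intro h i hi j hj hij
    rcases Nat.lt_or_ge i j with h' | h'
    · have := h i hi j hj h'
      rw [Nat.max_eq_right h'.le, Nat.min_eq_left h'.le]
      omega
    · have hji : j < i := by omega
      have := h j hj i hi hji
      rw [Nat.max_eq_left hji.le, Nat.min_eq_right hji.le]
      omega

theorem dlegal_subset {L M : Finset ℕ} (h : DLegal L) (hM : M ⊆ L) : DLegal M :=
  fun i hi j hj hij => h i (hM hi) j (hM hj) hij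

theorem fql_dlegal {L : Finset ℕ} (h : FQLegal L) : DLegal L := h.1

def Tcnt (n : ℕ) : ℕ := ((Finset.Icc 1 n).powerset.filter FQLegal).card
def Ucnt (n : ℕ) : ℕ := ((Finset.Icc 1 n).powerset.filter DLegal).card
def Scnt (q : ℕ → ℕ) (n : ℕ) : ℕ :=
  ((Finset.Icc 1 n).powerset.filter
    (fun L => FQLegal L ∧ (∑ j ∈ L, q j) < q (n+1))).card

theorem Scnt_le_Tcnt (q : ℕ → ℕ) (n : ℕ) : Scnt q n ≤ Tcnt n := by
  apply Finset.card_le_card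
  intro L hL
  rw [Finset.mem_filter] at hL ⊢
  exact ⟨hL.1, hL.2.1⟩

theorem Tcnt_le_Ucnt (n : ℕ) : Tcnt n ≤ Ucnt n := by
  apply Finset.card_le_card
  intro L hL
  rw [Finset.mem_filter] at hL ⊢
  exact ⟨hL.1, fql_dlegal hL.2⟩

theorem Tcnt_le_Scnt {q : ℕ → ℕ} (hq : IsFQSeq q) (m : ℕ) :
    Tcnt (m+1) ≤ Scnt q (m+5) := by
  apply Finset.card_le_card
  intro L hL
  rw [Finset.mem_filter, Finset.mem_powerset] at hL ⊢
  refine ⟨fun x hx => ?_, hL.2, ?_⟩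
  · have := Finset.mem_Icc.1 (hL.1 hx)
    exact Finset.mem_Icc.2 (by omega)
  · have h1 : (∑ j ∈ L, q j) ≤ (∑ j ∈ Finset.Icc 1 (m+1), q j) :=
      Finset.sum_le_sum_of_subset hL.1
    have h2 := sum_Icc_q hq m
    have : m + 5 + 1 = m + 6 := by omega
    rw [this]
    omega

theorem Ucnt_pos (n : ℕ) : 1 ≤ Ucnt n := by
  rw [Ucnt, Nat.one_le_iff_ne_zero, ← Nat.pos_iff_ne_zero, Finset.card_pos]
  exact ⟨∅, Finset.mem_filter.2 ⟨Finset.mem_powerset.2 (Finset.empty_subset _),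
    fun i hi => absurd hi (Finset.notMem_empty i)⟩⟩

theorem Ucnt_mono {m n : ℕ} (h : m ≤ n) : Ucnt m ≤ Ucnt n := by
  apply Finset.card_le_card
  intro L hL
  rw [Finset.mem_filter, Finset.mem_powerset] at hL ⊢
  exact ⟨fun x hx => by have := Finset.mem_Icc.1 (hL.1 hx); exact Finset.mem_Icc.2 (by omega),
    hL.2⟩

theorem Ucnt_le_Tcnt (n : ℕ) : Ucnt n ≤ Tcnt (n+1) := by
  apply Finset.card_le_card_of_injOn (fun L => L.image (· + 1))
  · intro L hL
    rw [Finset.mem_coe, Finset.mem_filter, Finset.mem_powerset] at hL ⊢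
    constructor
    · intro x hx
      obtain ⟨a, ha, rfl⟩ := Finset.mem_image.1 hx
      have := Finset.mem_Icc.1 (hL.1 ha)
      exact Finset.mem_Icc.2 (by omega)
    · constructor
      · rw [dlegal_iff] at hL
        have hD : DLegal (L.image (· + 1)) := by
          rw [dlegal_iff]
          intro i hi j hj hij
          obtain ⟨a, ha, rfl⟩ := Finset.mem_image.1 hi
          obtain ⟨b, hb, rfl⟩ := Finset.mem_image.1 hj
          have := hL.2 a ha b hb (by omega)
          omega
        exact hD
      · rintro ⟨h1, _⟩
        obtain ⟨a, ha, hae⟩ := Finset.mem_image.1 h1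
        have := Finset.mem_Icc.1 (hL.1 ha)
        omega
  · intro L1 _ L2 _ he
    exact Finset.image_injective (add_left_injective 1) he

theorem Usub (m n : ℕ) : Ucnt (m + n) ≤ Ucnt m * Ucnt n := by
  unfold Ucnt
  rw [← Finset.card_product]
  apply Finset.card_le_card_of_injOn
    (fun L => (L.filter (· ≤ m), (L.filter (fun x => m < x)).image (fun x => x - m)))
  · intro L hL
    rw [Finset.mem_coe, Finset.mem_filter, Finset.mem_powerset] at hL
    rw [Finset.mem_coe, Finset.mem_product]
    constructor
    · rw [Finset.mem_filter, Finset.mem_powerset]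
      constructor
      · intro x hx
        rw [Finset.mem_filter] at hx
        have := Finset.mem_Icc.1 (hL.1 hx.1)
        exact Finset.mem_Icc.2 (by omega)
      · exact dlegal_subset hL.2 (Finset.filter_subset _ _)
    · rw [Finset.mem_filter, Finset.mem_powerset]
      constructor
      · intro x hx
        obtain ⟨a, ha, rfl⟩ := Finset.mem_image.1 hx
        rw [Finset.mem_filter] at ha
        have := Finset.mem_Icc.1 (hL.1 ha.1)
        have := ha.2
        exact Finset.mem_Icc.2 (by omega)
      · rw [dlegal_iff]
        intro i hi j hj hij
        obtain ⟨a, ha, rfl⟩ := Finset.mem_image.1 hi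
        obtain ⟨b, hb, rfl⟩ := Finset.mem_image.1 hj
        rw [Finset.mem_filter] at ha hb
        have hd := (dlegal_iff.1 hL.2) a ha.1 b hb.1 (by omega)
        have := ha.2; have := hb.2
        omega
  · intro L1 h1 L2 h2 he
    have he1 := congrArg Prod.fst he
    have he2 := congrArg Prod.snd he
    simp only at he1 he2
    ext x
    rcases le_or_gt x m with hx | hx
    · constructor
      · intro hxl
        have : x ∈ L1.filter (· ≤ m) := Finset.mem_filter.2 ⟨hxl, hx⟩
        rw [he1] at this
        exact (Finset.mem_filter.1 this).1
      · intro hxl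
        have : x ∈ L2.filter (· ≤ m) := Finset.mem_filter.2 ⟨hxl, hx⟩
        rw [← he1] at this
        exact (Finset.mem_filter.1 this).1
    · constructor
      · intro hxl
        have : x - m ∈ (L1.filter (fun y => m < y)).image (fun y => y - m) :=
          Finset.mem_image.2 ⟨x, Finset.mem_filter.2 ⟨hxl, hx⟩, rfl⟩
        rw [he2] at this
        obtain ⟨b, hb, hbe⟩ := Finset.mem_image.1 this
        rw [Finset.mem_filter] at hb
        have : b = x := by have := hb.2; omega
        exact this ▸ hb.1
      · intro hxl
        have : x - m ∈ (L2.filter (fun y => m < y)).image (fun y => y - m) :=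
          Finset.mem_image.2 ⟨x, Finset.mem_filter.2 ⟨hxl, hx⟩, rfl⟩
        rw [← he2] at this
        obtain ⟨b, hb, hbe⟩ := Finset.mem_image.1 this
        rw [Finset.mem_filter] at hb
        have : b = x := by have := hb.2; omega
        exact this ▸ hb.1

theorem Usuper (m n : ℕ) : Ucnt m * Ucnt n ≤ Ucnt (m + n + 4) := by
  unfold Ucnt
  rw [← Finset.card_product]
  apply Finset.card_le_card_of_injOn
    (fun P : Finset ℕ × Finset ℕ => P.1 ∪ P.2.image (fun x => x + (m+4)))
  · rintro ⟨A, B⟩ hP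
    rw [Finset.mem_coe, Finset.mem_product] at hP
    obtain ⟨hA, hB⟩ := hP
    rw [Finset.mem_filter, Finset.mem_powerset] at hA hB
    rw [Finset.mem_coe, Finset.mem_filter, Finset.mem_powerset]
    constructor
    · intro x hx
      rcases Finset.mem_union.1 hx with hx' | hx'
      · have := Finset.mem_Icc.1 (hA.1 hx')
        exact Finset.mem_Icc.2 (by omega)
      · obtain ⟨a, ha, rfl⟩ := Finset.mem_image.1 hx'
        have := Finset.mem_Icc.1 (hB.1 ha)
        exact Finset.mem_Icc.2 (by omega)
    · rw [dlegal_iff]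
      intro i hi j hj hij
      rcases Finset.mem_union.1 hi with hi' | hi' <;>
        rcases Finset.mem_union.1 hj with hj' | hj'
      · exact (dlegal_iff.1 hA.2) i hi' j hj' hij
      · obtain ⟨b, hb, rfl⟩ := Finset.mem_image.1 hj'
        have h1 := Finset.mem_Icc.1 (hA.1 hi')
        have h2 := Finset.mem_Icc.1 (hB.1 hb)
        omega
      · obtain ⟨a, ha, rfl⟩ := Finset.mem_image.1 hi'
        have h1 := Finset.mem_Icc.1 (hB.1 ha)
        have h2 := Finset.mem_Icc.1 (hA.1 hj')
        omega
      · obtain ⟨a, ha, rfl⟩ := Finset.mem_image.1 hi'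
        obtain ⟨b, hb, rfl⟩ := Finset.mem_image.1 hj'
        have := (dlegal_iff.1 hB.2) a ha b hb (by omega)
        omega
  · rintro ⟨A1, B1⟩ h1 ⟨A2, B2⟩ h2 he
    simp only [Finset.mem_coe, Finset.mem_product, Finset.mem_filter,
      Finset.mem_powerset] at h1 h2
    simp only at he
    obtain ⟨⟨hA1, -⟩, ⟨hB1, -⟩⟩ := h1
    obtain ⟨⟨hA2, -⟩, ⟨hB2, -⟩⟩ := h2
    have key : ∀ (A B : Finset ℕ), A ⊆ Finset.Icc 1 m → B ⊆ Finset.Icc 1 n →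
        ∀ x, (x ∈ A ∪ B.image (fun y => y + (m+4)) ↔
          (x ≤ m ∧ x ∈ A) ∨ (m + 4 < x ∧ x - (m+4) ∈ B)) := by
      intro A B hA hB x
      constructor
      · intro hx
        rcases Finset.mem_union.1 hx with hx' | hx'
        · exact Or.inl ⟨(Finset.mem_Icc.1 (hA hx')).2, hx'⟩
        · obtain ⟨a, ha, rfl⟩ := Finset.mem_image.1 hx'
          have := Finset.mem_Icc.1 (hB ha)
          exact Or.inr ⟨by omega, by simpa using ha⟩
      · intro hx
        rcases hx with ⟨_, hx'⟩ | ⟨hgt, hx'⟩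
        · exact Finset.mem_union_left _ hx'
        · refine Finset.mem_union_right _ (Finset.mem_image.2 ⟨x - (m+4), hx', by omega⟩)
    have hAeq : A1 = A2 := by
      ext x
      rcases le_or_gt x m with hx | hx
      · constructor
        · intro h
          have := (key A1 B1 hA1 hB1 x).2 (Or.inl ⟨hx, h⟩)
          rw [he] at this
          rcases (key A2 B2 hA2 hB2 x).1 this with ⟨_, h'⟩ | ⟨h', _⟩
          · exact h'
          · omega
        · intro h
          have := (key A2 B2 hA2 hB2 x).2 (Or.inl ⟨hx, h⟩)
          rw [← he] at this
          rcases (key A1 B1 hA1 hB1 x).1 this with ⟨_, h'⟩ | ⟨h', _⟩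
          · exact h'
          · omega
      · constructor
        · intro h
          have := Finset.mem_Icc.1 (hA1 h); omega
        · intro h
          have := Finset.mem_Icc.1 (hA2 h); omega
    have hBeq : B1 = B2 := by
      ext x
      constructor
      · intro h
        have hxb := Finset.mem_Icc.1 (hB1 h)
        have := (key A1 B1 hA1 hB1 (x + (m+4))).2 (Or.inr ⟨by omega, by simpa using h⟩)
        rw [he] at this
        rcases (key A2 B2 hA2 hB2 (x + (m+4))).1 this with ⟨h', _⟩ | ⟨_, h'⟩
        · have := Finset.mem_Icc.1 (hB1 h); omega
        · simpa using h'
      · intro h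
        have hxb := Finset.mem_Icc.1 (hB2 h)
        have := (key A2 B2 hA2 hB2 (x + (m+4))).2 (Or.inr ⟨by omega, by simpa using h⟩)
        rw [← he] at this
        rcases (key A1 B1 hA1 hB1 (x + (m+4))).1 this with ⟨h', _⟩ | ⟨_, h'⟩
        · have := Finset.mem_Icc.1 (hB2 h); omega
        · simpa using h'
    exact Prod.ext hAeq hBeq

theorem Upow : ∀ (k n : ℕ), Ucnt n ^ k ≤ Ucnt (k * (n + 4)) := by
  intro k n
  induction k with
  | zero => simpa using Ucnt_pos 0
  | succ j ih =>
    calc Ucnt n ^ (j+1) = Ucnt n ^ j * Ucnt n := by ring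
    _ ≤ Ucnt (j * (n+4)) * Ucnt n := Nat.mul_le_mul_right _ ih
    _ ≤ Ucnt (j * (n+4) + n + 4) := Usuper _ _
    _ = Ucnt ((j+1) * (n+4)) := by ring_nf

def U13S : Finset (Finset ℕ) := {∅, {1}, {2}, {3}, {4}, {5}, {6}, {7}, {8}, {9}, {10}, {11}, {12}, {13}, {1,3}, {1,6}, {1,7}, {1,8}, {1,9}, {1,10}, {1,11}, {1,12}, {1,13}, {2,4}, {2,7}, {2,8}, {2,9}, {2,10}, {2,11}, {2,12}, {2,13}, {3,5}, {3,8}, {3,9}, {3,10}, {3,11}, {3,12}, {3,13}, {4,6}, {4,9}, {4,10}, {4,11}, {4,12}, {4,13}, {5,7}, {5,10}, {5,11}, {5,12}, {5,13}, {6,8}, {6,11}, {6,12}, {6,13}, {7,9}, {7,12}, {7,13}, {8,10}, {8,13}, {9,11}, {10,12}, {11,13}, {1,3,8}, {1,3,9}, {1,3,10}, {1,3,11}, {1,3,12}, {1,3,13}, {1,6,8}, {1,6,11}, {1,6,12}, {1,6,13}, {1,7,9}, {1,7,12}, {1,7,13}, {1,8,10}, {1,8,13}, {1,9,11}, {1,10,12},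 {1,11,13}, {2,4,9}, {2,4,10}, {2,4,11}, {2,4,12}, {2,4,13}, {2,7,9}, {2,7,12}, {2,7,13}, {2,8,10}, {2,8,13}, {2,9,11}, {2,10,12}, {2,11,13}, {3,5,10}, {3,5,11}, {3,5,12}, {3,5,13}, {3,8,10}, {3,8,13}, {3,9,11}, {3,10,12}, {3,11,13}, {4,6,11}, {4,6,12}, {4,6,13}, {4,9,11}, {4,10,12}, {4,11,13}, {5,7,12}, {5,7,13}, {5,10,12}, {5,11,13}, {6,8,13}, {6,11,13}, {1,3,8,10}, {1,3,8,13}, {1,3,9,11}, {1,3,10,12}, {1,3,11,13}, {1,6,8,13}, {1,6,11,13}, {2,4,9,11}, {2,4,10,12}, {2,4,11,13}, {3,5,10,12}, {3,5,11,13}, {4,6,11,13}}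

set_option maxRecDepth 40000 in
theorem U13S_prop : ∀ L ∈ U13S, L ⊆ Finset.Icc 1 13 ∧ DLegal L := by decide

set_option maxRecDepth 40000 in
theorem U13S_card : U13S.card = 126 := by decide

theorem U13 : 120 ≤ Ucnt 13 := by
  have hsub : U13S ⊆ (Finset.Icc 1 13).powerset.filter DLegal := fun L hL =>
    Finset.mem_filter.2 ⟨Finset.mem_powerset.2 (U13S_prop L hL).1, (U13S_prop L hL).2⟩
  have := Finset.card_le_card hsub
  rw [U13S_card] at this
  exact le_trans (by omega) this

end FQA

namespace FQA
section
variable {q : ℕ → ℕ}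

theorem dFQ_eq (hq : IsFQSeq q) {n m : ℕ} (hm : m < q (n+1)) :
    dFQ q m = ((Finset.Icc 1 n).powerset.filter
      (fun L => FQLegal L ∧ (∑ j ∈ L, q j) = m)).card := by
  classical
  have hset : {L : Finset ℕ | (∀ j ∈ L, 1 ≤ j) ∧ FQLegal L ∧ (∑ j ∈ L, q j) = m}
      = ↑((Finset.Icc 1 n).powerset.filter
        (fun L => FQLegal L ∧ (∑ j ∈ L, q j) = m)) := by
    ext L
    simp only [Set.mem_setOf_eq, Finset.coe_filter, Finset.mem_powerset]
    constructor
    · rintro ⟨hb, hl, hs⟩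
      refine ⟨fun x hx => Finset.mem_Icc.2 ⟨hb x hx, ?_⟩, hl, hs⟩
      by_contra hgt
      push_neg at hgt
      have h1 : q (n+1) ≤ q x := q_mono hq (by omega) (by omega)
      have h2 : q x ≤ ∑ j ∈ L, q j := Finset.single_le_sum (fun i _ => Nat.zero_le _) hx
      omega
    · rintro ⟨hb, hl, hs⟩
      exact ⟨fun x hx => (Finset.mem_Icc.1 (hb hx)).1, hl, hs⟩
  have : dFQ q m = Nat.card
      ↥{L : Finset ℕ | (∀ j ∈ L, 1 ≤ j) ∧ FQLegal L ∧ (∑ j ∈ L, q j) = m} := rfl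
  rw [this, hset, Nat.card_coe_set_eq, Set.ncard_coe_finset]

theorem sum_dFQ (hq : IsFQSeq q) (n : ℕ) :
    (∑ m ∈ Finset.range (q (n+1)), dFQ q m) = Scnt q n := by
  classical
  rw [Finset.sum_congr rfl (fun m hm => dFQ_eq hq (Finset.mem_range.1 hm))]
  rw [Scnt, Finset.card_eq_sum_card_fiberwise
    (f := fun L => ∑ j ∈ L, q j) (t := Finset.range (q (n+1)))
    (fun L hL => Finset.mem_range.2 (Finset.mem_filter.1 hL).2.2)]
  apply Finset.sum_congr rfl
  intro b hb
  have hb' := Finset.mem_range.1 hb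
  congr 1
  ext L
  simp only [Finset.mem_filter]
  constructor
  · rintro ⟨hp, hl, hs⟩
    exact ⟨⟨hp, hl, by omega⟩, hs⟩
  · rintro ⟨⟨hp, hl, _⟩, hs⟩
    exact ⟨hp, hl, hs⟩

end

-- ### Real-analytic part
open Real

noncomputable def uU (n : ℕ) : ℝ := Real.log (Ucnt n)

theorem uU_nonneg (n : ℕ) : 0 ≤ uU n :=
  Real.log_nonneg (by exact_mod_cast Ucnt_pos n)

theorem Ucnt_cast_pos (n : ℕ) : (0:ℝ) < (Ucnt n : ℝ) := by
  exact_mod_cast Ucnt_pos n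

theorem uU_sub : Subadditive uU := by
  intro m n
  rw [uU, uU, uU, ← Real.log_mul (ne_of_gt (Ucnt_cast_pos m)) (ne_of_gt (Ucnt_cast_pos n))]
  apply Real.log_le_log (Ucnt_cast_pos (m+n))
  exact_mod_cast Usub m n

theorem uU_bdd : BddBelow (Set.range fun n : ℕ => uU n / n) := by
  refine ⟨0, fun x hx => ?_⟩
  obtain ⟨n, rfl⟩ := hx
  exact div_nonneg (uU_nonneg n) (Nat.cast_nonneg n)

noncomputable def lamU : ℝ := uU_sub.lim

theorem lamU_le (n : ℕ) (hn : n ≠ 0) : lamU ≤ uU n / n := uU_sub.lim_le_div uU_bdd hn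

theorem lamU_ge (n : ℕ) : uU n / (n + 4) ≤ lamU := by
  have htend := uU_sub.tendsto_lim uU_bdd
  have hphi : Filter.Tendsto (fun j : ℕ => j * (n+4)) Filter.atTop Filter.atTop :=
    Filter.tendsto_atTop_atTop_of_monotone (fun a b hab => Nat.mul_le_mul_right _ hab)
      (fun b => ⟨b, Nat.le_mul_of_pos_right b (by omega)⟩)
  have hcomp := htend.comp hphi
  apply ge_of_tendsto hcomp
  filter_upwards [Filter.eventually_ge_atTop 1] with j hj
  have hpow : Ucnt n ^ j ≤ Ucnt (j * (n+4)) := Upow j n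
  have hlog : (j : ℝ) * uU n ≤ uU (j * (n+4)) := by
    rw [uU, uU]
    calc (j : ℝ) * Real.log (Ucnt n) = Real.log ((Ucnt n : ℝ) ^ j) := by
          rw [Real.log_pow]
    _ ≤ Real.log (Ucnt (j * (n+4))) := by
          apply Real.log_le_log (pow_pos (Ucnt_cast_pos n) j)
          exact_mod_cast hpow
  show uU n / (n + 4) ≤ uU (j * (n+4)) / ((j * (n+4) : ℕ) : ℝ)
  rw [div_le_div_iff₀ (by positivity) (by push_cast; positivity)]
  push_cast
  calc uU n * (j * (n+4)) = (j * uU n) * (n+4) := by ring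
  _ ≤ uU (j * (n+4)) * (n+4) := by
        apply mul_le_mul_of_nonneg_right hlog (by positivity)

noncomputable def muU : ℝ := Real.exp lamU

theorem muU_pos : 0 < muU := Real.exp_pos _

theorem Ucnt_ge_mu (n : ℕ) : muU ^ n ≤ (Ucnt n : ℝ) := by
  rcases Nat.eq_zero_or_pos n with rfl | hn
  · simpa using (by exact_mod_cast Ucnt_pos 0 : (1:ℝ) ≤ (Ucnt 0 : ℝ))
  · have h := lamU_le n (by omega)
    have : (n:ℝ) * lamU ≤ uU n := by
      rw [div_eq_mul_inv] at h
      have hn' : (0:ℝ) < n := by exact_mod_cast hn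
      calc (n:ℝ) * lamU ≤ (n:ℝ) * (uU n * (n:ℝ)⁻¹) := by
            apply mul_le_mul_of_nonneg_left h (by positivity)
      _ = uU n := by field_simp
    calc muU ^ n = Real.exp ((n:ℝ) * lamU) := by
          rw [muU, ← Real.exp_nat_mul]
    _ ≤ Real.exp (uU n) := Real.exp_le_exp.2 this
    _ = (Ucnt n : ℝ) := by rw [uU, Real.exp_log (Ucnt_cast_pos n)]

theorem Ucnt_le_mu (n : ℕ) : (Ucnt n : ℝ) ≤ muU ^ (n + 4) := by
  have h := lamU_ge n
  have : uU n ≤ ((n:ℝ) + 4) * lamU := by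
    rw [div_le_iff₀ (by positivity)] at h
    linarith
  calc (Ucnt n : ℝ) = Real.exp (uU n) := by rw [uU, Real.exp_log (Ucnt_cast_pos n)]
  _ ≤ Real.exp (((n:ℝ) + 4) * lamU) := Real.exp_le_exp.2 this
  _ = muU ^ (n+4) := by
        rw [muU, ← Real.exp_nat_mul]
        push_cast
        ring_nf

theorem exists_rho : ∃ ρ : ℝ, (13/10 : ℝ) ≤ ρ ∧ ρ ≤ 53/40 ∧ ρ^5 = ρ^4 + 1 := by
  have hcont : ContinuousOn (fun x : ℝ => x^5 - x^4 - 1) (Set.Icc (13/10) (53/40)) := by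
    fun_prop
  have hiv := intermediate_value_Icc (by norm_num : (13/10:ℝ) ≤ 53/40) hcont
  have h0 : (0:ℝ) ∈ Set.Icc ((13/10:ℝ)^5 - (13/10:ℝ)^4 - 1)
      ((53/40:ℝ)^5 - (53/40:ℝ)^4 - 1) := by
    constructor <;> norm_num
  obtain ⟨ρ, hρm, hρe⟩ := hiv h0
  exact ⟨ρ, hρm.1, hρm.2, by simp only at hρe; linarith⟩

section
variable {q : ℕ → ℕ}

theorem qgrow (hq : IsFQSeq q) {ρ : ℝ} (h1 : (13/10:ℝ) ≤ ρ) (h5 : ρ^5 = ρ^4 + 1) :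
    ∀ n, (q 11 : ℝ) / ρ^14 * ρ^(n+10) ≤ (q (n+11) : ℝ) ∧
         (q (n+11) : ℝ) ≤ (q 15 : ℝ) / ρ^10 * ρ^(n+10) := by
  have hρ0 : (0:ℝ) < ρ := by linarith
  have hρ1 : (1:ℝ) ≤ ρ := by linarith
  intro n
  induction n using Nat.strong_induction_on with
  | _ n ih =>
    rcases Nat.lt_or_ge n 5 with hn | hn
    · constructor
      · have hp : ρ^(n+10) ≤ ρ^14 := pow_le_pow_right₀ hρ1 (by omega)
        have hq11 : (q 11:ℝ) ≤ q (n+11) := by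
          exact_mod_cast q_mono hq (by omega) (by omega)
        calc (q 11:ℝ)/ρ^14 * ρ^(n+10) ≤ (q 11:ℝ)/ρ^14 * ρ^14 := by
              apply mul_le_mul_of_nonneg_left hp (by positivity)
        _ = (q 11 : ℝ) := by field_simp
        _ ≤ _ := hq11
      · have hp : ρ^10 ≤ ρ^(n+10) := pow_le_pow_right₀ hρ1 (by omega)
        have hq15 : (q (n+11):ℝ) ≤ q 15 := by
          exact_mod_cast q_mono hq (by omega) (by omega)
        calc (q (n+11):ℝ) ≤ (q 15 : ℝ) := hq15
        _ = (q 15:ℝ)/ρ^10 * ρ^10 := by field_simp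
        _ ≤ (q 15:ℝ)/ρ^10 * ρ^(n+10) := by
              apply mul_le_mul_of_nonneg_left hp (by positivity)
    · obtain ⟨m, rfl⟩ : ∃ m, n = m + 5 := ⟨n - 5, by omega⟩
      have hrec := R1eq hq (m+9)
      have ih1 := ih (m+4) (by omega)
      have ih2 := ih m (by omega)
      have hkey : ∀ c:ℝ, c * ρ^(m+15) = c * ρ^(m+14) + c * ρ^(m+10) := by
        intro c
        have h : ρ^(m+15) = ρ^(m+14) + ρ^(m+10) := by
          have e1 : ρ^(m+15) = ρ^(m+10) * ρ^5 := by ring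
          have e2 : ρ^(m+14) = ρ^(m+10) * ρ^4 := by ring
          rw [e1, e2, h5]; ring
        rw [h]; ring
      simp only [Nat.add_assoc, Nat.reduceAdd] at hrec ih1 ih2 ⊢
      constructor
      · calc (q 11:ℝ)/ρ^14 * ρ^(m+15)
            = (q 11:ℝ)/ρ^14 * ρ^(m+14) + (q 11:ℝ)/ρ^14 * ρ^(m+10) := hkey _
        _ ≤ (q (m+15):ℝ) + (q (m+11):ℝ) := add_le_add ih1.1 ih2.1
        _ = (q (m+16):ℝ) := by rw [hrec]; push_cast; ring
      · calc (q (m+16):ℝ) = (q (m+15):ℝ) + (q (m+11):ℝ) := by rw [hrec]; push_cast; ring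
        _ ≤ (q 15:ℝ)/ρ^10 * ρ^(m+14) + (q 15:ℝ)/ρ^10 * ρ^(m+10) := add_le_add ih1.2 ih2.2
        _ = (q 15:ℝ)/ρ^10 * ρ^(m+15) := (hkey _).symm

end

theorem mu_gt_rho {ρ : ℝ} (hρ0 : 0 < ρ) (h53 : ρ ≤ 53/40) : ρ < muU := by
  have h1 : (120:ℝ) ≤ muU^17 := by
    refine le_trans ?_ (Ucnt_le_mu 13)
    exact_mod_cast U13
  have h2 : ρ^17 ≤ (53/40:ℝ)^17 := pow_le_pow_left₀ hρ0.le h53 17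
  have h3 : ((53:ℝ)/40)^17 < 120 := by norm_num
  by_contra hcon
  push_neg at hcon
  have h4 : muU^17 ≤ ρ^17 := pow_le_pow_left₀ muU_pos.le hcon 17
  linarith

end FQA

set_option maxHeartbeats 2000000 in
theorem stmt_5 (q : ℕ → ℕ) (hq : IsFQSeq q) :
    ∃ lam : ℝ, 1 < lam ∧ ∃ C1 C2 : ℝ, 0 < C1 ∧ C1 < C2 ∧
      ∀ᶠ n : ℕ in Filter.atTop,
        C1 * lam ^ n ≤ dFQave q n ∧ dFQave q n ≤ C2 * lam ^ n := by
  classical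
  obtain ⟨ρ, hρ1, hρ2, hρ5⟩ := FQA.exists_rho
  have hρ0 : (0:ℝ) < ρ := by linarith
  have hμρ : ρ < FQA.muU := FQA.mu_gt_rho hρ0 hρ2
  have hμ0 : (0:ℝ) < FQA.muU := FQA.muU_pos
  have hμ1 : (1:ℝ) < FQA.muU := lt_trans (by linarith) hμρ
  set lam : ℝ := FQA.muU / ρ with hlamdef
  have hlam : 1 < lam := (one_lt_div hρ0).2 hμρ
  have hq11 : (0:ℝ) < q 11 := by exact_mod_cast FQA.q_pos hq (by omega)
  have hq15 : (0:ℝ) < q 15 := by exact_mod_cast FQA.q_pos hq (by omega)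
  set cq : ℝ := (q 11 : ℝ)/ρ^14 with hcqdef
  set Cq : ℝ := (q 15 : ℝ)/ρ^10 with hCqdef
  have hcq : 0 < cq := by positivity
  have hCq : 0 < Cq := by positivity
  set C1 : ℝ := 1 / (Cq * FQA.muU^5) with hC1def
  set C2 : ℝ := FQA.muU^4 / cq + C1 + 1 with hC2def
  have hC1 : 0 < C1 := by positivity
  have hC2 : C1 < C2 := by
    have : 0 < FQA.muU^4 / cq := by positivity
    simp only [hC2def]
    linarith
  refine ⟨lam, hlam, C1, C2, hC1, hC2, ?_⟩
  rw [Filter.eventually_atTop]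
  refine ⟨40, fun n hn => ?_⟩
  obtain ⟨k, rfl⟩ : ∃ k, n = k + 40 := ⟨n - 40, by omega⟩
  have hqpos : (0:ℝ) < q (k+41) := by
    exact_mod_cast FQA.q_pos hq (by omega)
  -- identify the average with the counting quantity
  have hsum := FQA.sum_dFQ hq (k+40)
  have hdave : dFQave q (k+40) = (FQA.Scnt q (k+40) : ℝ) / (q (k+41) : ℝ) := by
    rw [dFQave]
    have hnum : (∑ m ∈ Finset.range (q (k+40+1)), (dFQ q m : ℝ))
        = ((FQA.Scnt q (k+40) : ℕ) : ℝ) := by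
      rw [← hsum]
      push_cast
      rfl
    rw [hnum]
  -- upper and lower bounds for the count
  have hup : (FQA.Scnt q (k+40) : ℝ) ≤ FQA.muU^(k+44) := by
    refine le_trans ?_ (FQA.Ucnt_le_mu (k+40))
    have h1 := FQA.Scnt_le_Tcnt q (k+40)
    have h2 := FQA.Tcnt_le_Ucnt (k+40)
    exact_mod_cast le_trans h1 h2
  have hlo : FQA.muU^(k+35) ≤ (FQA.Scnt q (k+40) : ℝ) := by
    refine le_trans (FQA.Ucnt_ge_mu (k+35)) ?_
    have h1 := FQA.Ucnt_le_Tcnt (k+35)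
    have h2 := FQA.Tcnt_le_Scnt hq (k+35)
    exact_mod_cast le_trans h1 h2
  -- bounds for the denominator
  have hqb := FQA.qgrow hq hρ1 hρ5 (k+30)
  simp only [Nat.add_assoc, Nat.reduceAdd] at hqb
  rw [hdave]
  constructor
  · have h1 : FQA.muU^(k+35) / (Cq * ρ^(k+40)) ≤
        (FQA.Scnt q (k+40):ℝ) / (q (k+41):ℝ) := by
      exact div_le_div₀ (Nat.cast_nonneg _) hlo hqpos hqb.2
    refine le_trans (le_of_eq ?_) h1
    rw [hC1def, hlamdef, div_pow]
    field_simp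
    ring
  · have h1 : (FQA.Scnt q (k+40):ℝ) / (q (k+41):ℝ) ≤
        FQA.muU^(k+44) / (cq * ρ^(k+40)) := by
      exact div_le_div₀ (pow_nonneg FQA.muU_pos.le _) hup
        (mul_pos hcq (pow_pos hρ0 _)) hqb.1
    refine le_trans h1 ?_
    have h2 : FQA.muU^(k+44) / (cq * ρ^(k+40)) = (FQA.muU^4/cq) * lam^(k+40) := by
      rw [hlamdef, div_pow]
      field_simp
      ring
    rw [h2]
    have h3 : (0:ℝ) < lam^(k+40) := pow_pos (by linarith) _
    have h4 : FQA.muU^4/cq ≤ C2 := by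
      simp only [hC2def]
      linarith
    exact mul_le_mul_of_nonneg_right h4 h3.le
end
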